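/- arXiv:1206.5746 — 3 statements merged into one kernel-verified Lean document; each statement's English description precedes it below -/
import Mathlib

section
/- Let (W,S) be any Coxeter system with S finite, J ⊆ S, and let w = uv be a parabolic decomposition with respect to J. Then u is the unique maximal element of [e,w] ∩ W_J if and only if P_w(q) = P_u(q) · P_v^J(q). -/
/-!
Common definitions for formalizing "Rationally smooth elements of Coxeter groups and
triangle group avoidance" (Richmond–Slofstra).

Conventions: a Coxeter system `cs : CoxeterSystem M W` has Coxeter matrix `M` with entries
in `ℕ`, where `M i j = 0` encodes `m_{ij} = ∞`.
-/

namespace TriAvoid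

noncomputable section

open CoxeterSystem

variable {B W : Type*} [Group W] {M : CoxeterMatrix B}

/-- The Bruhat order on `W`, via the subword property: `x ≤ w` if and only if some reduced
word for `w` has a sublist which is a reduced word for `x`. -/
def bruhatLE (cs : CoxeterSystem M W) (x w : W) : Prop :=
  ∃ l l' : List B, cs.IsReduced l ∧ cs.wordProd l = w ∧
    List.Sublist l' l ∧ cs.IsReduced l' ∧ cs.wordProd l' = x

/-- The `i`-th coefficient `a_i` of the Poincaré polynomial
`P_w(q) = ∑_{x ≤ w} q^{ℓ(x)}` of `w`. -/
def coeff (cs : CoxeterSystem M W) (w : W) (i : ℕ) : ℕ :=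
  {x : W | bruhatLE cs x w ∧ cs.length x = i}.ncard

/-- `w` is palindromic (rationally smooth): `a_i = a_{ℓ(w) - i}` for all `i`. -/
def Palindromic (cs : CoxeterSystem M W) (w : W) : Prop :=
  ∀ i ≤ cs.length w, coeff cs w i = coeff cs w (cs.length w - i)

/-- `w` is `k`-palindromic: `a_i = a_{ℓ(w) - i}` for all `0 ≤ i < k`. -/
def KPalindromic (cs : CoxeterSystem M W) (k : ℕ) (w : W) : Prop :=
  ∀ i < k, i ≤ cs.length w → coeff cs w i = coeff cs w (cs.length w - i)

/-- The support of `w`: the set of (indices of) simple reflections lying below `w`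
in Bruhat order.  (These are exactly the elements `u ≤ w` with `ℓ(u) = 1`.) -/
def supp (cs : CoxeterSystem M W) (w : W) : Set B :=
  {i | bruhatLE cs (cs.simple i) w}

/-- The divisor set `pred(w)` of elements `u ≤ w` with `ℓ(u) = ℓ(w) - 1`. -/
def pred (cs : CoxeterSystem M W) (w : W) : Set W :=
  {x | bruhatLE cs x w ∧ cs.length x + 1 = cs.length w}

/-- The right descent set `D_R(w) = {s ∈ S : ℓ(ws) < ℓ(w)}` (as a set of indices). -/
def DR (cs : CoxeterSystem M W) (w : W) : Set B :=
  {i | cs.IsRightDescent w i}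

/-- The left descent set `D_L(w) = {s ∈ S : ℓ(sw) < ℓ(w)}` (as a set of indices). -/
def DL (cs : CoxeterSystem M W) (w : W) : Set B :=
  {i | cs.IsLeftDescent w i}

/-- The standard parabolic subgroup `W_J` generated by `J ⊆ S`. -/
def parabolic (cs : CoxeterSystem M W) (J : Set B) : Subgroup W :=
  Subgroup.closure (cs.simple '' J)

/-- `v` is the minimal length representative of its coset `W_J v`, i.e. `v ∈ W^J`. -/
def IsMinRep (cs : CoxeterSystem M W) (J : Set B) (v : W) : Prop :=
  ∀ u ∈ parabolic cs J, cs.length v ≤ cs.length (u * v)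

/-- `(u)(v)` is the parabolic decomposition of `w = u * v` with respect to `J`:
`u ∈ W_J`, `v ∈ W^J`, and `ℓ(uv) = ℓ(u) + ℓ(v)`. -/
def IsParabolicDecomp (cs : CoxeterSystem M W) (J : Set B) (u v : W) : Prop :=
  u ∈ parabolic cs J ∧ IsMinRep cs J v ∧
    cs.length (u * v) = cs.length u + cs.length v

/-- `(u)(v)` is a BP-decomposition of `w = u * v` with respect to `J`: a parabolic
decomposition such that `u` is the unique maximal element of `[e, w] ∩ W_J`. -/
def IsBP (cs : CoxeterSystem M W) (J : Set B) (u v : W) : Prop :=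
  IsParabolicDecomp cs J u v ∧ bruhatLE cs u (u * v) ∧
    ∀ x : W, bruhatLE cs x (u * v) → x ∈ parabolic cs J → bruhatLE cs x u

/-- `(u)(v)` is a Grassmannian factorization of `w = u * v`: a parabolic decomposition
with respect to `J = supp(u)` such that `|supp(w)| = |supp(u)| + 1`. -/
def IsGrassmannian (cs : CoxeterSystem M W) (u v : W) : Prop :=
  IsParabolicDecomp cs (supp cs u) u v ∧
    (supp cs (u * v)).ncard = (supp cs u).ncard + 1

/-- `W` avoids every triangle group in `T = {(2,b,c) : b, c ≥ 3, b < ∞}`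
(recall `M i j = 0` means `m_{ij} = ∞`). -/
def AvoidsT (M : CoxeterMatrix B) : Prop :=
  ¬∃ r s t : B, M r s = 2 ∧ 3 ≤ M r t ∧ (3 ≤ M s t ∨ M s t = 0)

/-- The `i`-th coefficient of the relative Poincaré polynomial
`P^J_w(q) = ∑_{x ∈ [e,w] ∩ W^J} q^{ℓ(x)}`. -/
def coeffRel (cs : CoxeterSystem M W) (J : Set B) (w : W) (i : ℕ) : ℕ :=
  {x : W | bruhatLE cs x w ∧ IsMinRep cs J x ∧ cs.length x = i}.ncard

/-- The `q`-integer `[k]_q = 1 + q + ⋯ + q^{k-1}`, as a polynomial in `q`. -/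
def qInt (k : ℕ) : Polynomial ℕ :=
  ∑ i ∈ Finset.range k, Polynomial.X ^ i

/-- The alternating word `stst⋯` of length `k`, starting with `s`. -/
def altWord (s t : B) (k : ℕ) : List B :=
  (List.range k).map fun i => if i % 2 = 0 then s else t

/-- The spiral word `strstr⋯` of length `k`, cycling through `s, t, r` in this order. -/
def spiralWord (s t r : B) (k : ℕ) : List B :=
  (List.range k).map fun i => if i % 3 = 0 then s else if i % 3 = 1 then t else r

/-- `w = u₁ u₂ ⋯ u_d` (given as a list) is a separable factorization: it is reduced and
the supports of the factors are pairwise disjoint. -/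
def IsSepFactorization (cs : CoxeterSystem M W) (w : W) (l : List W) : Prop :=
  w = l.prod ∧ cs.length w = (l.map cs.length).sum ∧
    l.Pairwise fun a b => supp cs a ∩ supp cs b = ∅

/-- `w` is inseparable: it admits no nontrivial separable reduced factorization. -/
def Inseparable (cs : CoxeterSystem M W) (w : W) : Prop :=
  ¬∃ u₁ u₂ : W, u₁ ≠ 1 ∧ u₂ ≠ 1 ∧ w = u₁ * u₂ ∧
    cs.length w = cs.length u₁ + cs.length u₂ ∧ supp cs u₁ ∩ supp cs u₂ = ∅

/-- `w = v₁ v₂ ⋯ v_{|supp(w)|}` (given as a list) is a complete Grassmannian factorization: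
for every `i < |supp(w)|`, `(v₁ ⋯ v_i)(v_{i+1})` is a Grassmannian factorization. -/
def IsCompleteGrassmannian (cs : CoxeterSystem M W) (w : W) (l : List W) : Prop :=
  w = l.prod ∧ l.length = (supp cs w).ncard ∧
    ∀ i < l.length, IsGrassmannian cs ((l.take i).prod) (l.getD i 1)

end

end TriAvoid

namespace TriAvoid
namespace Aux

open CoxeterSystem List
open scoped Classical
set_option linter.unusedSectionVars false

variable {B W : Type*} [Group W] {M : CoxeterMatrix B} (cs : CoxeterSystem M W)

local prefix:100 "σ" => cs.simple
local prefix:100 "π" => cs.wordProd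
local prefix:100 "ℓ" => cs.length

/-- mod-2 count of `t` in a list. -/
noncomputable def par (t : W) (L : List W) : ZMod 2 :=
  (L.map (fun x => if x = t then (1 : ZMod 2) else 0)).sum

@[simp] theorem par_nil (t : W) : par t ([] : List W) = 0 := rfl

theorem par_cons (t a : W) (L : List W) :
    par t (a :: L) = (if a = t then (1 : ZMod 2) else 0) + par t L := by
  simp [par]

theorem par_append (t : W) (L L' : List W) :
    par t (L ++ L') = par t L + par t L' := by
  simp [par]

theorem par_reverse (t : W) (L : List W) : par t L.reverse = par t L := by
  simp [par, List.sum_reverse]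

theorem par_map_conj (t g : W) (L : List W) :
    par t (L.map (fun x => g⁻¹ * x * g)) = par (g * t * g⁻¹) L := by
  induction L with
  | nil => rfl
  | cons a L ih =>
    simp only [List.map_cons, par_cons, ih]
    congr 1
    have h : (g⁻¹ * a * g = t) ↔ (a = g * t * g⁻¹) := by
      constructor <;> rintro rfl <;> group
    simp only [h]

theorem par_eq_zero_of_not_mem {t : W} {L : List W} (h : t ∉ L) : par t L = 0 := by
  induction L with
  | nil => rfl
  | cons a L ih =>
    have ha : ¬ (a = t) := by rintro rfl; exact h (List.mem_cons_self)
    rw [par_cons, if_neg ha, zero_add]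
    exact ih (fun hm => h (List.mem_cons_of_mem _ hm))

theorem par_eq_one_of_nodup_mem {t : W} {L : List W} (hnd : L.Nodup) (h : t ∈ L) :
    par t L = 1 := by
  induction L with
  | nil => simp at h
  | cons a L ih =>
    rw [par_cons]
    rcases List.mem_cons.mp h with rfl | hm
    · rw [if_pos rfl, par_eq_zero_of_not_mem (List.nodup_cons.mp hnd).1, add_zero]
    · rw [ih (List.nodup_cons.mp hnd).2 hm, if_neg, zero_add]
      rintro rfl
      exact (List.nodup_cons.mp hnd).1 hm

theorem mem_of_par_eq_one {t : W} {L : List W} (h : par t L = 1) : t ∈ L := by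
  by_contra hc
  rw [par_eq_zero_of_not_mem hc] at h
  exact zero_ne_one h

private theorem conj_eq_iff (p t y : W) : p * t * p⁻¹ = y ↔ t = p⁻¹ * y * p := by
  constructor <;> rintro rfl <;> group

private theorem pow_inv_mul_simple (i j : B) (n : ℕ) :
    ((σ i * σ j) ^ n)⁻¹ * σ j = σ j * (σ i * σ j) ^ n := by
  induction n with
  | zero => simp
  | succ n ih =>
    have h1 : ((σ i * σ j) ^ (n+1))⁻¹ * σ j
        = (σ j * σ i) * (σ j * (σ i * σ j) ^ n) := by
      rw [pow_succ, mul_inv_rev, mul_assoc, ih, mul_inv_rev, cs.inv_simple, cs.inv_simple]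
    rw [h1, pow_succ', mul_assoc, ← mul_assoc (cs.simple i) (cs.simple j)]

/-! ### The parity permutation representation -/

/-- The permutation of `W × ZMod 2` associated to the simple reflection `i`. -/
noncomputable def sigma (i : B) : Equiv.Perm (W × ZMod 2) :=
  Function.Involutive.toPerm
    (fun x => (σ i * x.1 * σ i, x.2 + if x.1 = σ i then 1 else 0))
    (by
      intro x
      have h1 : σ i * (σ i * x.1 * σ i) * σ i = x.1 := by
        rw [← mul_assoc, ← mul_assoc, cs.simple_mul_simple_self, one_mul, mul_assoc,
          cs.simple_mul_simple_self, mul_one]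
      have h2 : (σ i * x.1 * σ i = σ i) ↔ (x.1 = σ i) := by
        constructor
        · intro h
          have h' := congrArg (fun y => σ i * y * σ i) h
          rw [h1] at h'
          rw [h', cs.simple_mul_simple_self, one_mul]
        · rintro h
          rw [h, cs.simple_mul_simple_self, one_mul]
      ext
      · exact h1
      · simp only [h2]
        rcases Classical.em (x.1 = σ i) with h | h
        · simp only [if_pos h, add_assoc]
          have h11 : (1 + 1 : ZMod 2) = 0 := by decide
          rw [h11, add_zero]
        · simp only [if_neg h, add_zero])

theorem sigma_apply (i : B) (t : W) (ε : ZMod 2) :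
    sigma cs i (t, ε) = (σ i * t * σ i, ε + if t = σ i then 1 else 0) := rfl

theorem sigma_mul_pow_apply (i j : B) (n : ℕ) (t : W) (ε : ZMod 2) :
    ((sigma cs i * sigma cs j) ^ n) (t, ε) =
      ((σ i * σ j) ^ n * t * ((σ i * σ j) ^ n)⁻¹,
        ε + ∑ k ∈ Finset.range n,
          ((if t = σ j * (σ i * σ j) ^ (2 * k) then (1 : ZMod 2) else 0) +
            (if t = σ j * (σ i * σ j) ^ (2 * k + 1) then (1 : ZMod 2) else 0))) := by
  induction n with
  | zero => simp
  | succ n ih =>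
    rw [pow_succ', Equiv.Perm.mul_apply, ih, Equiv.Perm.mul_apply, sigma_apply, sigma_apply]
    have hc1 : ((σ i * σ j) ^ n * t * ((σ i * σ j) ^ n)⁻¹ = σ j)
        ↔ (t = σ j * (σ i * σ j) ^ (2 * n)) := by
      rw [conj_eq_iff, pow_inv_mul_simple, mul_assoc, ← pow_add, two_mul]
    have hc2 : (σ j * ((σ i * σ j) ^ n * t * ((σ i * σ j) ^ n)⁻¹) * σ j = σ i)
        ↔ (t = σ j * (σ i * σ j) ^ (2 * n + 1)) := by
      have e0 : (σ j * ((σ i * σ j) ^ n * t * ((σ i * σ j) ^ n)⁻¹) * (σ j)⁻¹ = σ i)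
          ↔ ((σ i * σ j) ^ n * t * ((σ i * σ j) ^ n)⁻¹ = (σ j)⁻¹ * σ i * σ j) :=
        conj_eq_iff _ _ _
      rw [cs.inv_simple] at e0
      rw [e0, conj_eq_iff]
      have e1 : ((σ i * σ j) ^ n)⁻¹ * (σ j * σ i * σ j) * (σ i * σ j) ^ n
          = σ j * (σ i * σ j) ^ (2 * n + 1) := by
        have ha : ((σ i * σ j) ^ n)⁻¹ * (σ j * σ i * σ j) * (σ i * σ j) ^ n
            = (((σ i * σ j) ^ n)⁻¹ * σ j) * ((σ i * σ j) * (σ i * σ j) ^ n) := by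
          simp only [mul_assoc]
        rw [ha, pow_inv_mul_simple, ← pow_succ', mul_assoc, ← pow_add,
          show n + (n + 1) = 2 * n + 1 by omega]
      rw [e1]
    rw [Prod.mk.injEq]
    constructor
    · rw [pow_succ', mul_inv_rev, mul_inv_rev, cs.inv_simple, cs.inv_simple]
      group
    · simp only [hc1, hc2, Finset.sum_range_succ]
      ring

theorem isLiftable_sigma : M.IsLiftable (fun i => sigma cs i) := by
  intro i j
  apply Equiv.ext
  rintro ⟨t, ε⟩
  rw [sigma_mul_pow_apply, cs.simple_mul_simple_pow i j, Equiv.Perm.one_apply]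
  rw [Prod.mk.injEq]
  constructor
  · rw [one_mul, inv_one, mul_one]
  · have key : ∀ m : ℕ, (∑ k ∈ Finset.range m,
        ((if t = σ j * (σ i * σ j) ^ (2 * k) then (1 : ZMod 2) else 0) +
          (if t = σ j * (σ i * σ j) ^ (2 * k + 1) then (1 : ZMod 2) else 0)))
        = ∑ a ∈ Finset.range (2 * m), (if t = σ j * (σ i * σ j) ^ a then (1 : ZMod 2) else 0) := by
      intro m
      induction m with
      | zero => simp
      | succ m ihm =>
        rw [Finset.sum_range_succ, ihm, show 2 * (m + 1) = (2 * m + 1) + 1 by ring,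
          Finset.sum_range_succ, Finset.sum_range_succ, add_assoc]
    rw [key (M i j)]
    set m := M i j with hm
    have hsplit : ∑ a ∈ Finset.range (2 * m),
        (if t = σ j * (σ i * σ j) ^ a then (1 : ZMod 2) else 0)
        = (∑ a ∈ Finset.range m, (if t = σ j * (σ i * σ j) ^ a then (1 : ZMod 2) else 0))
          + ∑ a ∈ Finset.range m, (if t = σ j * (σ i * σ j) ^ (m + a) then (1 : ZMod 2) else 0) := by
      rw [two_mul, ← Finset.sum_range_add_sum_Ico _ (Nat.le_add_right m m),
        Finset.sum_Ico_eq_sum_range, Nat.add_sub_cancel_left]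
    have hper : ∀ a : ℕ, (σ i * σ j) ^ (m + a) = (σ i * σ j) ^ a := by
      intro a
      rw [pow_add, hm, cs.simple_mul_simple_pow i j, one_mul]
    rw [hsplit]
    have : ∀ a ∈ Finset.range m, (if t = σ j * (σ i * σ j) ^ (m + a) then (1 : ZMod 2) else 0)
        = (if t = σ j * (σ i * σ j) ^ a then (1 : ZMod 2) else 0) := by
      intro a _
      rw [hper a]
    rw [Finset.sum_congr rfl this, CharTwo.add_self_eq_zero, add_zero]


/-- The parity homomorphism. -/
noncomputable def phi : W →* Equiv.Perm (W × ZMod 2) :=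
  cs.lift ⟨fun i => sigma cs i, isLiftable_sigma cs⟩

theorem phi_simple (i : B) : phi cs (σ i) = sigma cs i :=
  cs.lift_apply_simple (isLiftable_sigma cs) i

theorem ris_cons (i : B) (ω : List B) :
    cs.rightInvSeq (i :: ω) = ((π ω)⁻¹ * σ i * π ω) :: cs.rightInvSeq ω := rfl

theorem lis_cons (i : B) (ω : List B) :
    cs.leftInvSeq (i :: ω) = σ i :: (cs.leftInvSeq ω).map (fun z => σ i * z * (σ i)⁻¹) := rfl

theorem phi_wordProd (ω : List B) (t : W) (ε : ZMod 2) :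
    phi cs (π ω) (t, ε) = (π ω * t * (π ω)⁻¹, ε + par t (cs.rightInvSeq ω)) := by
  induction ω generalizing ε with
  | nil => simp [par]
  | cons i ω ih =>
    rw [cs.wordProd_cons, map_mul, Equiv.Perm.mul_apply, ih, phi_simple, sigma_apply]
    rw [ris_cons, par_cons, Prod.mk.injEq]
    constructor
    · rw [mul_inv_rev, cs.inv_simple]
      group
    · have hcond : (π ω * t * (π ω)⁻¹ = σ i) ↔ ((π ω)⁻¹ * σ i * π ω = t) := by
        rw [conj_eq_iff _ _ (σ i)]
        exact eq_comm
      simp only [hcond]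
      ring

theorem par_ris_eq_of_wordProd_eq {ω ω' : List B} (h : π ω = π ω') (t : W) :
    par t (cs.rightInvSeq ω) = par t (cs.rightInvSeq ω') := by
  have h1 := phi_wordProd cs ω t 0
  have h2 := phi_wordProd cs ω' t 0
  rw [h] at h1
  rw [h1] at h2
  have := congrArg Prod.snd h2
  simpa using this


/-! ### Part 2: strong exchange, deletion, and the subword property -/

theorem par_map_conj' (t g : W) (L : List W) :
    par t (L.map (fun x => g * x * g⁻¹)) = par (g⁻¹ * t * g) L := by
  have h := par_map_conj t g⁻¹ L
  simp only [inv_inv] at h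
  exact h

theorem par_lis (ω : List B) (x : W) :
    par x (cs.leftInvSeq ω) = par ((π ω)⁻¹ * x * π ω) (cs.rightInvSeq ω) := by
  induction ω generalizing x with
  | nil => simp
  | cons i ω ih =>
    rw [lis_cons, ris_cons, par_cons, par_cons, par_map_conj', ih]
    have harg : (π (i :: ω))⁻¹ * x * π (i :: ω)
        = (π ω)⁻¹ * ((σ i)⁻¹ * x * σ i) * π ω := by
      rw [cs.wordProd_cons]; group
    rw [harg]
    have hcond : ((π ω)⁻¹ * σ i * π ω = (π ω)⁻¹ * ((σ i)⁻¹ * x * σ i) * π ω)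
        ↔ (σ i = x) := by
      constructor
      · intro h
        have h2 : σ i = (σ i)⁻¹ * x * σ i := by
          calc σ i = π ω * ((π ω)⁻¹ * σ i * π ω) * (π ω)⁻¹ := by group
            _ = π ω * ((π ω)⁻¹ * ((σ i)⁻¹ * x * σ i) * π ω) * (π ω)⁻¹ := by rw [h]
            _ = (σ i)⁻¹ * x * σ i := by group
        calc σ i = σ i * ((σ i)⁻¹ * x * σ i) * (σ i)⁻¹ := by rw [← h2]; group
          _ = x := by group
      · rintro rfl
        rw [show (σ i)⁻¹ * σ i * σ i = σ i by group]
    simp only [hcond]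

theorem ris_append (ω ψ : List B) :
    cs.rightInvSeq (ω ++ ψ)
      = (cs.rightInvSeq ω).map (fun z => (π ψ)⁻¹ * z * π ψ) ++ cs.rightInvSeq ψ := by
  induction ω with
  | nil => simp
  | cons k ω ih =>
    rw [List.cons_append, ris_cons, ris_cons, ih, List.map_cons, List.cons_append]
    congr 1
    rw [cs.wordProd_append]
    group

theorem par_ris_palindrome (ρ a : List B) (i : B) :
    par (π a * σ i * (π a)⁻¹) (cs.rightInvSeq (ρ ++ (a ++ (i :: a.reverse))))
      = par (π a * σ i * (π a)⁻¹) (cs.rightInvSeq ρ) + 1 := by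
  set t := π a * σ i * (π a)⁻¹ with ht
  have hY : π (a ++ (i :: a.reverse)) = t := by
    rw [cs.wordProd_append, cs.wordProd_cons, cs.wordProd_reverse, ht, mul_assoc]
  have hYpar : par t (cs.rightInvSeq (a ++ (i :: a.reverse))) = 1 := by
    rw [ris_append, par_append, par_map_conj]
    have hg2 : π (i :: a.reverse) * t * (π (i :: a.reverse))⁻¹ = σ i := by
      rw [cs.wordProd_cons, cs.wordProd_reverse, ht]
      group
    rw [hg2, ris_cons, par_cons]
    have hhead : ((π a.reverse)⁻¹ * σ i * π a.reverse = t) := by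
      rw [cs.wordProd_reverse, ht]
      group
    rw [if_pos hhead, cs.rightInvSeq_reverse, par_reverse, par_lis]
    have hlast : (π a)⁻¹ * t * π a = σ i := by rw [ht]; group
    rw [hlast]
    generalize par (σ i) (cs.rightInvSeq a) = A
    revert A
    decide
  rw [ris_append, par_append, par_map_conj, hY, show t * t * t⁻¹ = t by group, hYpar]

theorem par_ris_eq_of_inv {w t : W} (ht : cs.IsReflection t) {ω : List B} (hω : π ω = w) :
    par t (cs.rightInvSeq ω) = if ℓ (w * t) < ℓ w then 1 else 0 := by
  obtain ⟨g, i, hgi⟩ := id ht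
  obtain ⟨a, hared, haπ⟩ := cs.exists_reduced_word' g
  have hta : t = π a * σ i * (π a)⁻¹ := by rw [hgi, haπ]
  have hYt : π (a ++ (i :: a.reverse)) = t := by
    rw [cs.wordProd_append, cs.wordProd_cons, cs.wordProd_reverse, hta, mul_assoc]
  have hrel : ∀ (x : W) (ωx ρ : List B), π ωx = x → π ρ = x * t →
      par t (cs.rightInvSeq ωx) = par t (cs.rightInvSeq ρ) + 1 := by
    intro x ωx ρ hx hρ
    have hπeq : π (ρ ++ (a ++ (i :: a.reverse))) = π ωx := by
      rw [cs.wordProd_append, hYt, hρ, hx, mul_assoc, ht.mul_self, mul_one]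
    have hwd := par_ris_eq_of_wordProd_eq cs hπeq t
    have hpal := par_ris_palindrome cs ρ a i
    rw [← hta] at hpal
    rw [← hwd, hpal]
  by_cases hlt : ℓ (w * t) < ℓ w
  · rw [if_pos hlt]
    by_contra hne
    have h0 : par t (cs.rightInvSeq ω) = 0 := by
      have hd : ∀ z : ZMod 2, z ≠ 1 → z = 0 := by decide
      exact hd _ hne
    obtain ⟨ρ, hρred, hρπ⟩ := cs.exists_reduced_word' (w * t)
    have hr := hrel w ω ρ hω hρπ.symm
    rw [h0] at hr
    have hone : par t (cs.rightInvSeq ρ) = 1 := by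
      have hd : ∀ z : ZMod 2, (0 : ZMod 2) = z + 1 → z = 1 := by decide
      exact hd _ hr
    have hinv := cs.isRightInversion_of_mem_rightInvSeq hρred (mem_of_par_eq_one hone)
    rw [← hρπ] at hinv
    have h2 := hinv.2
    rw [mul_assoc, ht.mul_self, mul_one] at h2
    omega
  · rw [if_neg hlt]
    by_contra hne
    have h1 : par t (cs.rightInvSeq ω) = 1 := by
      have hd : ∀ z : ZMod 2, z ≠ 0 → z = 1 := by decide
      exact hd _ hne
    obtain ⟨ρ, hρred, hρπ⟩ := cs.exists_reduced_word' w
    have heq := par_ris_eq_of_wordProd_eq cs (hω.trans hρπ) t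
    rw [h1] at heq
    have hinv := cs.isRightInversion_of_mem_rightInvSeq hρred (mem_of_par_eq_one heq.symm)
    rw [← hρπ] at hinv
    exact hlt hinv.2

theorem strong_exchange_right {w t : W} (ht : cs.IsReflection t) (hlt : ℓ (w * t) < ℓ w)
    {ω : List B} (hω : cs.IsReduced ω) (hπ : π ω = w) :
    ∃ m : List B, m.Sublist ω ∧ m.length + 1 = ω.length ∧ π m = w * t := by
  have h1 : par t (cs.rightInvSeq ω) = 1 := by
    rw [par_ris_eq_of_inv cs ht hπ, if_pos hlt]
  have hmem : t ∈ cs.rightInvSeq ω := mem_of_par_eq_one h1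
  obtain ⟨⟨j, hj⟩, hget⟩ := List.mem_iff_get.mp hmem
  have hj' : j < ω.length := by
    have := cs.length_rightInvSeq ω
    omega
  have hgetD : (cs.rightInvSeq ω).getD j 1 = t := by
    rw [List.getD_eq_getElem _ _ hj, ← hget]
    simp [List.get_eq_getElem]
  refine ⟨ω.eraseIdx j, List.eraseIdx_sublist ω j, ?_, ?_⟩
  · rw [List.length_eraseIdx_add_one hj']
  · rw [← cs.wordProd_mul_getD_rightInvSeq ω j, hgetD, hπ]

theorem strong_exchange_left {w t : W} (ht : cs.IsReflection t) (hlt : ℓ (t * w) < ℓ w)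
    {ω : List B} (hω : cs.IsReduced ω) (hπ : π ω = w) :
    ∃ m : List B, m.Sublist ω ∧ m.length + 1 = ω.length ∧ π m = t * w := by
  have hrev : cs.IsReduced ω.reverse := (cs.isReduced_reverse_iff ω).mpr hω
  have hπrev : π ω.reverse = w⁻¹ := by rw [cs.wordProd_reverse, hπ]
  have hlt' : ℓ (w⁻¹ * t) < ℓ w⁻¹ := by
    have h1 : w⁻¹ * t = (t * w)⁻¹ := by rw [mul_inv_rev, ht.inv]
    rw [h1, cs.length_inv, cs.length_inv]
    exact hlt
  obtain ⟨m', hsub, hlen, hπ'⟩ := strong_exchange_right cs ht hlt' hrev hπrev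
  refine ⟨m'.reverse, ?_, ?_, ?_⟩
  · have := hsub.reverse
    rwa [List.reverse_reverse] at this
  · rw [List.length_reverse, hlen, List.length_reverse]
  · rw [cs.wordProd_reverse, hπ', mul_inv_rev, inv_inv, ht.inv]

theorem exists_reduced_sublist_aux : ∀ (n : ℕ) (ω : List B), ω.length ≤ n →
    ∃ m : List B, m.Sublist ω ∧ cs.IsReduced m ∧ π m = π ω := by
  intro n
  induction n with
  | zero =>
    intro ω h
    have : ω = [] := List.length_eq_zero_iff.mp (Nat.le_zero.mp h)
    subst this
    refine ⟨[], List.Sublist.refl _, ?_, rfl⟩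
    show ℓ (π ([] : List B)) = _
    simp
  | succ n ihn =>
    intro ω hlen
    by_cases hred : cs.IsReduced ω
    · exact ⟨ω, List.Sublist.refl ω, hred, rfl⟩
    · cases ω with
      | nil =>
        exact absurd (show cs.IsReduced [] from by show ℓ (π ([] : List B)) = _; simp) hred
      | cons k r =>
        by_cases hr : cs.IsReduced r
        · rcases cs.length_simple_mul (π r) k with h | h
          · exfalso
            apply hred
            show ℓ (π (k :: r)) = (k :: r).length
            rw [cs.wordProd_cons, h, hr]
            simp
          · have hlt : ℓ (σ k * π r) < ℓ (π r) := by omega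
            obtain ⟨m', hsub, hlen', hπ'⟩ :=
              strong_exchange_left cs (cs.isReflection_simple k) hlt hr rfl
            have hm'len : m'.length ≤ n := by
              have : (k :: r).length = r.length + 1 := rfl
              omega
            obtain ⟨m, hm1, hm2, hm3⟩ := ihn m' hm'len
            refine ⟨m, hm1.trans (hsub.trans (List.sublist_cons_self k r)), hm2, ?_⟩
            rw [hm3, hπ', cs.wordProd_cons]
        · have hrn : r.length ≤ n := by
            have : (k :: r).length = r.length + 1 := rfl
            omega
          obtain ⟨m', hm'sub, hm'red, hm'π⟩ := ihn r hrn
          have hm'lt : m'.length < r.length := by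
            rcases Nat.lt_or_ge m'.length r.length with h | h
            · exact h
            · exfalso
              have := hm'sub.eq_of_length_le h
              subst this
              exact hr hm'red
          obtain ⟨m, hm1, hm2, hm3⟩ := ihn (k :: m') (by simp; omega)
          refine ⟨m, hm1.trans (hm'sub.cons₂ k), hm2, ?_⟩
          rw [hm3, cs.wordProd_cons, cs.wordProd_cons, hm'π]

theorem exists_reduced_sublist (ω : List B) :
    ∃ m : List B, m.Sublist ω ∧ cs.IsReduced m ∧ π m = π ω :=
  exists_reduced_sublist_aux cs ω.length ω le_rfl

/-! ### The Bruhat order via reflection chains -/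

/-- Bruhat order defined by chains of length-increasing reflection multiplications. -/
def Rle (x w : W) : Prop :=
  Relation.ReflTransGen (fun a b => ∃ t, cs.IsReflection t ∧ b = a * t ∧ ℓ a < ℓ b) x w

theorem rle_S2 {x w : W} (h : Rle cs x w) :
    ∀ ω : List B, cs.IsReduced ω → π ω = w →
      ∃ m : List B, m.Sublist ω ∧ cs.IsReduced m ∧ π m = x := by
  induction h with
  | refl => exact fun ω hred hπ => ⟨ω, List.Sublist.refl ω, hred, hπ⟩
  | tail hxc hstep ih =>
    rename_i c d
    intro ω hred hπ
    obtain ⟨t, ht, rfl, hlt⟩ := hstep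
    have h1 : ℓ (c * t * t) < ℓ (c * t) := by
      rw [mul_assoc, ht.mul_self, mul_one]
      exact hlt
    obtain ⟨m', hsub, hlen', hπ'⟩ := strong_exchange_right cs ht h1 hred hπ
    obtain ⟨m'', hsub2, hred2, hπ2⟩ := exists_reduced_sublist cs m'
    have hc : π m'' = c := by
      rw [hπ2, hπ', mul_assoc, ht.mul_self, mul_one]
    obtain ⟨m, h1', h2', h3'⟩ := ih m'' hred2 hc
    exact ⟨m, h1'.trans (hsub2.trans hsub), h2', h3'⟩

theorem bruhat_S1_S3 (n : ℕ) :
    (∀ w : W, ℓ w = n → ∀ ω : List B, cs.IsReduced ω → π ω = w →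
      ∀ m : List B, m.Sublist ω → cs.IsReduced m → Rle cs (π m) w) ∧
    (∀ b : W, ℓ b = n → ∀ i : B, ℓ b < ℓ (σ i * b) → ∀ a : W, Rle cs a b →
      ℓ a < ℓ (σ i * a) → Rle cs (σ i * a) (σ i * b)) := by
  induction n using Nat.strong_induction_on with
  | _ n ihn =>
  have hS1 : ∀ w : W, ℓ w = n → ∀ ω : List B, cs.IsReduced ω → π ω = w →
      ∀ m : List B, m.Sublist ω → cs.IsReduced m → Rle cs (π m) w := by
    intro w hw ω hred hπ m hsub hmred
    cases ω with
    | nil =>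
      have hm : m = [] := List.sublist_nil.mp hsub
      subst hm
      rw [← hπ]
      exact Relation.ReflTransGen.refl
    | cons k r =>
      have hn : n = r.length + 1 := by
        rw [← hw, ← hπ, hred]
        rfl
      have hrred : cs.IsReduced r := by
        have := CoxeterSystem.IsReduced.drop (ω := k :: r) hred (j := 1)
        simpa using this
      have hlr : ℓ (π r) = r.length := hrred
      have hw' : ℓ w = r.length + 1 := by omega
      have hpr_lt : ℓ (π r) < ℓ w := by omega
      have hstep : Rle cs (π r) w := by
        apply Relation.ReflTransGen.single
        refine ⟨(π r)⁻¹ * σ k * π r, ?_, ?_, hpr_lt⟩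
        · have := (cs.isReflection_simple k).conj (π r)⁻¹
          simpa [inv_inv] using this
        · rw [← hπ, cs.wordProd_cons]
          group
      rcases List.sublist_cons_iff.mp hsub with hmr | ⟨m', rfl, hm'r⟩
      · have := (ihn r.length (by omega)).1 (π r) hlr r hrred rfl m hmr hmred
        exact this.trans hstep
      · 
        have hm'red : cs.IsReduced m' := by
          have := CoxeterSystem.IsReduced.drop (ω := k :: m') hmred (j := 1)
          simpa using this
        have hrle : Rle cs (π m') (π r) :=
          (ihn r.length (by omega)).1 (π r) hlr r hrred rfl m' hm'r hm'red
        have h1 : ℓ (π r) < ℓ (σ k * π r) := by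
          rw [← cs.wordProd_cons, hπ]
          omega
        have h2 : ℓ (π m') < ℓ (σ k * π m') := by
          have hq : ℓ (σ k * π m') = m'.length + 1 := by
            rw [← cs.wordProd_cons]
            exact hmred
          have := cs.length_wordProd_le m'
          omega
        have := (ihn r.length (by omega)).2 (π r) hlr k h1 (π m') hrle h2
        rw [← cs.wordProd_cons, ← cs.wordProd_cons, hπ] at this
        exact this
  refine ⟨hS1, ?_⟩
  intro b hb i hbi a hab ha
  have H : ∀ b' : W, Rle cs a b' → ℓ b' ≤ n → ℓ b' < ℓ (σ i * b') →
      Rle cs (σ i * a) (σ i * b') := by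
    intro b' hab'
    induction hab' with
    | refl => intro _ _; exact Relation.ReflTransGen.refl
    | tail hac hstep ihc =>
      rename_i c d
      intro hleb hbi'
      obtain ⟨t, ht, rfl, hcb⟩ := hstep
      rcases Nat.lt_or_ge (ℓ c) (ℓ (σ i * c)) with hup | hdown
      · have h1 : Rle cs (σ i * a) (σ i * c) := ihc (by omega) hup
        have hsc : ℓ (σ i * c) = ℓ c + 1 := by
          rcases cs.length_simple_mul c i with h | h <;> omega
        have hsb : ℓ (σ i * (c * t)) = ℓ (c * t) + 1 := by
          rcases cs.length_simple_mul (c * t) i with h | h <;> omega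
        exact Relation.ReflTransGen.tail h1 ⟨t, ht, by rw [mul_assoc], by omega⟩
      · have hne := cs.length_simple_mul_ne c i
        have hlt : ℓ (σ i * c) < ℓ c := by omega
        have hS4 : Rle cs (σ i * a) c := by
          obtain ⟨ρ, hρred, hρπ⟩ := cs.exists_reduced_word' (σ i * c)
          have hcw : π (i :: ρ) = c := by
            rw [cs.wordProd_cons, ← hρπ, ← mul_assoc, cs.simple_mul_simple_self, one_mul]
          have hℓc : ℓ c = ρ.length + 1 := by
            have hd : ℓ (σ i * (σ i * c)) = ℓ c := by
              rw [← mul_assoc, cs.simple_mul_simple_self, one_mul]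
            rcases cs.length_simple_mul (σ i * c) i with h | h
            · rw [hd] at h
              have : ℓ (π ρ) = ρ.length := hρred
              rw [← hρπ] at this
              omega
            · rw [hd] at h
              omega
          have hcred : cs.IsReduced (i :: ρ) := by
            show ℓ (π (i :: ρ)) = (i :: ρ).length
            rw [hcw]
            simpa using hℓc
          obtain ⟨m, hmsub, hmred, hmπ⟩ := rle_S2 cs hac (i :: ρ) hcred hcw
          rcases List.sublist_cons_iff.mp hmsub with hmρ | ⟨m', rfl, hm'ρ⟩
          · 
            have hπim : π (i :: m) = σ i * a := by rw [cs.wordProd_cons, hmπ]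
            have hsa : ℓ (σ i * a) = ℓ a + 1 := by
              rcases cs.length_simple_mul a i with h | h <;> omega
            have himred : cs.IsReduced (i :: m) := by
              show ℓ (π (i :: m)) = (i :: m).length
              rw [hπim, hsa]
              have : ℓ (π m) = m.length := hmred
              rw [hmπ] at this
              simp [this]
            have := (ihn (ℓ c) (by omega)).1 c rfl (i :: ρ) hcred hcw
              (i :: m) (hmρ.cons₂ i) himred
            rw [hπim] at this
            exact this
          · exfalso
            have hπm : a = σ i * π m' := by rw [← hmπ, cs.wordProd_cons]
            have h1 : ℓ a = m'.length + 1 := by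
              have hh : ℓ (π (i :: m')) = (i :: m').length := hmred
              rw [hmπ] at hh
              simpa using hh
            have h2 : ℓ (σ i * a) = ℓ (π m') := by
              rw [hπm, ← mul_assoc, cs.simple_mul_simple_self, one_mul]
            have := cs.length_wordProd_le m'
            omega
        have hstep1 : Rle cs c (c * t) := Relation.ReflTransGen.single ⟨t, ht, rfl, hcb⟩
        have hstep2 : Rle cs (c * t) (σ i * (c * t)) := by
          apply Relation.ReflTransGen.single
          refine ⟨(c * t)⁻¹ * σ i * (c * t), ?_, by group, hbi'⟩
          have := (cs.isReflection_simple i).conj (c * t)⁻¹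
          simpa [inv_inv] using this
        exact (hS4.trans hstep1).trans hstep2
  exact H b hab (le_of_eq hb) hbi


/-! ### Part 3: Bruhat order basics -/

theorem bruhatLE_iff_rle {x w : W} : bruhatLE cs x w ↔ Rle cs x w := by
  constructor
  · rintro ⟨l, l', hl, hπ, hsub, hl', hπ'⟩
    have := (bruhat_S1_S3 cs (ℓ w)).1 w rfl l hl hπ l' hsub hl'
    rwa [hπ'] at this
  · intro h
    obtain ⟨ω, hred, hπ⟩ := cs.exists_reduced_word' w
    obtain ⟨m, hsub, hmred, hmπ⟩ := rle_S2 cs h ω hred hπ.symm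
    exact ⟨ω, m, hred, hπ.symm, hsub, hmred, hmπ⟩

theorem bruhat_refl (w : W) : bruhatLE cs w w := by
  rw [bruhatLE_iff_rle]
  exact Relation.ReflTransGen.refl

theorem bruhat_trans {x y z : W} (h1 : bruhatLE cs x y) (h2 : bruhatLE cs y z) :
    bruhatLE cs x z := by
  rw [bruhatLE_iff_rle] at *
  exact h1.trans h2

theorem bruhat_subword {x w : W} (h : bruhatLE cs x w) {ω : List B}
    (hred : cs.IsReduced ω) (hπ : π ω = w) :
    ∃ m : List B, m.Sublist ω ∧ cs.IsReduced m ∧ π m = x :=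
  rle_S2 cs ((bruhatLE_iff_rle cs).mp h) ω hred hπ

theorem bruhat_of_sublist {l m : List B} (hl : cs.IsReduced l) (hm : cs.IsReduced m)
    (hsub : m.Sublist l) : bruhatLE cs (π m) (π l) :=
  ⟨l, m, hl, rfl, hsub, hm, rfl⟩

theorem bruhat_length_le {x w : W} (h : bruhatLE cs x w) : ℓ x ≤ ℓ w := by
  obtain ⟨l, l', hl, hπ, hsub, hl', hπ'⟩ := h
  have h1 : ℓ x = l'.length := by rw [← hπ']; exact hl'
  have h2 : ℓ w = l.length := by rw [← hπ]; exact hl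
  rw [h1, h2]
  exact hsub.length_le

theorem bruhat_finite (w : W) : {x : W | bruhatLE cs x w}.Finite := by
  obtain ⟨ω, hred, hπ⟩ := cs.exists_reduced_word' w
  apply Set.Finite.subset ((List.finite_toSet ω.sublists).image cs.wordProd)
  intro x hx
  obtain ⟨m, hsub, _, hmπ⟩ := bruhat_subword cs hx hred hπ.symm
  exact ⟨m, List.mem_sublists.mpr hsub, hmπ⟩

theorem desc_word {i : B} {w : W} (hw : ℓ (σ i * w) < ℓ w) :
    ∃ ρ : List B, cs.IsReduced (i :: ρ) ∧ π (i :: ρ) = w ∧ π ρ = σ i * w := by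
  obtain ⟨ρ, hρred, hρπ⟩ := cs.exists_reduced_word' (σ i * w)
  have hcw : π (i :: ρ) = w := by
    rw [cs.wordProd_cons, ← hρπ, ← mul_assoc, cs.simple_mul_simple_self, one_mul]
  have hlρ : ℓ (σ i * w) = ρ.length := by rw [hρπ]; exact hρred
  have hlen : ℓ w = ρ.length + 1 := by
    have hd := cs.length_simple_mul (σ i * w) i
    rw [← mul_assoc, cs.simple_mul_simple_self, one_mul] at hd
    omega
  refine ⟨ρ, ?_, hcw, hρπ.symm⟩
  show ℓ (π (i :: ρ)) = (i :: ρ).length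
  rw [hcw]
  simpa using hlen

theorem bruhat_lift {i : B} {w y : W} (hw : ℓ (σ i * w) < ℓ w) (hy : ℓ y < ℓ (σ i * y))
    (h : bruhatLE cs y w) : bruhatLE cs y (σ i * w) := by
  obtain ⟨ρ, hired, hcw, hρπ⟩ := desc_word cs hw
  have hρred : cs.IsReduced ρ := by
    have := CoxeterSystem.IsReduced.drop (ω := i :: ρ) hired (j := 1)
    simpa using this
  obtain ⟨m, hmsub, hmred, hmπ⟩ := bruhat_subword cs h hired hcw
  rcases List.sublist_cons_iff.mp hmsub with hmρ | ⟨m', rfl, hm'ρ⟩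
  · exact ⟨ρ, m, hρred, hρπ, hmρ, hmred, hmπ⟩
  · exfalso
    have h1 : y = σ i * π m' := by rw [← hmπ, cs.wordProd_cons]
    have h2 : ℓ y = m'.length + 1 := by
      have hh : ℓ (π (i :: m')) = (i :: m').length := hmred
      rw [hmπ] at hh
      simpa using hh
    have h3 : ℓ (σ i * y) = ℓ (π m') := by
      rw [h1, ← mul_assoc, cs.simple_mul_simple_self, one_mul]
    have := cs.length_wordProd_le m'
    omega

/-! ### Part 4: parabolic subgroups and minimal coset representatives -/

variable (J : Set B)

theorem wordProd_mem_parabolic {l : List B} (hl : ∀ b ∈ l, b ∈ J) :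
    π l ∈ parabolic cs J := by
  induction l with
  | nil => exact Subgroup.one_mem _
  | cons i l ih =>
    rw [cs.wordProd_cons]
    exact Subgroup.mul_mem _
      (Subgroup.subset_closure ⟨i, hl i (List.mem_cons_self), rfl⟩)
      (ih fun b hb => hl b (List.mem_cons_of_mem _ hb))

theorem exists_word_of_mem_parabolic {x : W} (hx : x ∈ parabolic cs J) :
    ∃ l : List B, (∀ b ∈ l, b ∈ J) ∧ π l = x := by
  induction hx using Subgroup.closure_induction with
  | mem x hx =>
    obtain ⟨i, hi, rfl⟩ := hx
    exact ⟨[i], by simpa using hi, cs.wordProd_singleton i⟩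
  | one => exact ⟨[], by simp, cs.wordProd_nil⟩
  | mul x y _ _ hx hy =>
    obtain ⟨l1, hl1, rfl⟩ := hx
    obtain ⟨l2, hl2, rfl⟩ := hy
    exact ⟨l1 ++ l2, fun b hb => (List.mem_append.mp hb).elim (hl1 b) (hl2 b),
      cs.wordProd_append l1 l2⟩
  | inv x _ hx =>
    obtain ⟨l, hl, rfl⟩ := hx
    exact ⟨l.reverse, fun b hb => hl b (List.mem_reverse.mp hb), cs.wordProd_reverse l⟩

theorem exists_reduced_word_of_mem_parabolic {x : W} (hx : x ∈ parabolic cs J) :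
    ∃ l : List B, cs.IsReduced l ∧ (∀ b ∈ l, b ∈ J) ∧ π l = x := by
  obtain ⟨l0, hl0, hπ0⟩ := exists_word_of_mem_parabolic cs J hx
  obtain ⟨m, hsub, hred, hπ⟩ := exists_reduced_sublist cs l0
  exact ⟨m, hred, fun b hb => hl0 b (hsub.subset hb), hπ.trans hπ0⟩

/-- Key lemma: a reduced `J`-word concatenated with a reduced word of a minimal coset
representative is reduced. -/
theorem parabolic_min_reduced {la : List B} (hla : cs.IsReduced la) (hJ : ∀ b ∈ la, b ∈ J)
    {z : W} (hz : IsMinRep cs J z) {lz : List B} (hlz : cs.IsReduced lz) (hπz : π lz = z) :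
    cs.IsReduced (la ++ lz) := by
  induction la with
  | nil => simpa using hlz
  | cons i la' ih =>
    have hla' : cs.IsReduced la' := by
      have := CoxeterSystem.IsReduced.drop (ω := i :: la') hla (j := 1)
      simpa using this
    have hih : cs.IsReduced (la' ++ lz) := ih hla' (fun b hb => hJ b (List.mem_cons_of_mem _ hb))
    have hgoal : ((i :: la') ++ lz) = i :: (la' ++ lz) := rfl
    rcases cs.length_simple_mul (π (la' ++ lz)) i with h | h
    · show ℓ (π ((i :: la') ++ lz)) = ((i :: la') ++ lz).length
      rw [hgoal, cs.wordProd_cons, h, hih]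
      simp
    · exfalso
      have hlt : ℓ (σ i * π (la' ++ lz)) < ℓ (π (la' ++ lz)) := by omega
      obtain ⟨m, hmsub, hmlen, hmπ⟩ :=
        strong_exchange_left cs (cs.isReflection_simple i) hlt hih rfl
      rcases List.sublist_append_iff.mp hmsub with ⟨m1, m2, rfl, hm1, hm2⟩
      rw [cs.wordProd_append, cs.wordProd_append] at hmπ
      -- hmπ : π m1 * π m2 = σ i * (π la' * π lz)
      by_cases hcase : lz.length ≤ m2.length
      · have hm2eq : m2 = lz := hm2.eq_of_length_le hcase
        have he : π m1 = σ i * π la' := by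
          have h' : π m1 * π m2 = (σ i * π la') * π m2 := by
            rw [hmπ, mul_assoc, ← hm2eq]
          exact mul_right_cancel h'
        have h1 : ℓ (σ i * π la') = la'.length + 1 := by
          have hh : ℓ (π (i :: la')) = (i :: la').length := hla
          rw [cs.wordProd_cons] at hh
          simpa using hh
        have h2 : ℓ (π m1) ≤ m1.length := cs.length_wordProd_le m1
        have h3 : (m1 ++ m2).length + 1 = (la' ++ lz).length := hmlen
        have h5 : m2.length = lz.length := by rw [hm2eq]
        simp only [List.length_append] at h3
        rw [he] at h2
        omega
      · have hz2 : π m2 = ((π m1)⁻¹ * (σ i * π la')) * z := by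
          rw [← hπz]
          calc π m2 = (π m1)⁻¹ * (π m1 * π m2) := by group
            _ = (π m1)⁻¹ * (σ i * (π la' * π lz)) := by rw [hmπ]
            _ = ((π m1)⁻¹ * (σ i * π la')) * π lz := by group
        have hm1J : ∀ b ∈ m1, b ∈ J := fun b hb =>
          hJ b (List.mem_cons_of_mem _ (hm1.subset hb))
        have hmem : ((π m1)⁻¹ * (σ i * π la')) ∈ parabolic cs J := by
          refine Subgroup.mul_mem _ (Subgroup.inv_mem _ ?_) (Subgroup.mul_mem _ ?_ ?_)
          · exact wordProd_mem_parabolic cs J hm1J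
          · exact Subgroup.subset_closure ⟨i, hJ i (List.mem_cons_self), rfl⟩
          · exact wordProd_mem_parabolic cs J
              (fun b hb => hJ b (List.mem_cons_of_mem _ hb))
        have hmin := hz _ hmem
        rw [← hz2] at hmin
        have h4 : ℓ (π m2) ≤ m2.length := cs.length_wordProd_le m2
        have h6 : ℓ z = lz.length := by rw [← hπz]; exact hlz
        omega

theorem length_parabolic_mul {a z : W} (ha : a ∈ parabolic cs J) (hz : IsMinRep cs J z) :
    ℓ (a * z) = ℓ a + ℓ z := by
  obtain ⟨la, hred, hJl, hπ⟩ := exists_reduced_word_of_mem_parabolic cs J ha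
  obtain ⟨lz, hzred, hzπ⟩ := cs.exists_reduced_word' z
  have hcat : cs.IsReduced (la ++ lz) := parabolic_min_reduced cs J hred hJl hz hzred hzπ.symm
  have h1 : π (la ++ lz) = a * z := by rw [cs.wordProd_append, hπ, ← hzπ]
  have h2 : ℓ (π (la ++ lz)) = (la ++ lz).length := hcat
  rw [h1] at h2
  rw [h2, List.length_append]
  have h3 : ℓ a = la.length := by rw [← hπ]; exact hred
  have h4 : ℓ z = lz.length := by rw [hzπ]; exact hzred
  omega

theorem minRep_one : IsMinRep cs J 1 := by
  intro u _
  rw [cs.length_one]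
  exact Nat.zero_le _

theorem parabolic_decomp_unique {x1 x2 z1 z2 : W} (hx1 : x1 ∈ parabolic cs J)
    (hx2 : x2 ∈ parabolic cs J) (hz1 : IsMinRep cs J z1) (hz2 : IsMinRep cs J z2)
    (heq : x1 * z1 = x2 * z2) : x1 = x2 ∧ z1 = z2 := by
  have ha : (x2⁻¹ * x1) ∈ parabolic cs J := Subgroup.mul_mem _ (Subgroup.inv_mem _ hx2) hx1
  have ha' : (x1⁻¹ * x2) ∈ parabolic cs J := Subgroup.mul_mem _ (Subgroup.inv_mem _ hx1) hx2
  have he1 : z2 = (x2⁻¹ * x1) * z1 := by rw [mul_assoc, heq]; group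
  have he2 : z1 = (x1⁻¹ * x2) * z2 := by rw [mul_assoc, ← heq]; group
  have hl1 : ℓ z2 = ℓ (x2⁻¹ * x1) + ℓ z1 := by rw [he1, length_parabolic_mul cs J ha hz1]
  have hl2 : ℓ z1 = ℓ (x1⁻¹ * x2) + ℓ z2 := by rw [he2, length_parabolic_mul cs J ha' hz2]
  have h0 : ℓ (x2⁻¹ * x1) = 0 := by omega
  have hx : x2⁻¹ * x1 = 1 := cs.length_eq_zero_iff.mp h0
  constructor
  · calc x1 = x2 * (x2⁻¹ * x1) := by group
      _ = x2 := by rw [hx, mul_one]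
  · rw [he1, hx, one_mul]

theorem not_minRep_descent {z : W} (hz : ¬ IsMinRep cs J z) :
    ∃ j ∈ J, ℓ (σ j * z) < ℓ z := by
  set S : Set ℕ := {k : ℕ | ∃ a ∈ parabolic cs J, ℓ (a * z) = k} with hS
  have hne : S.Nonempty := ⟨ℓ z, 1, Subgroup.one_mem _, by rw [one_mul]⟩
  obtain ⟨a0, ha0, hmin⟩ : ∃ a0 ∈ parabolic cs J, ℓ (a0 * z) = sInf S := Nat.sInf_mem hne
  have hminrep : IsMinRep cs J (a0 * z) := by
    intro b hb
    rw [hmin, ← mul_assoc]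
    exact Nat.sInf_le ⟨b * a0, Subgroup.mul_mem _ hb ha0, rfl⟩
  have hne1 : a0⁻¹ ≠ 1 := by
    rintro h
    have : a0 = 1 := by rwa [inv_eq_one] at h
    rw [this, one_mul] at hminrep
    exact hz hminrep
  obtain ⟨lb, hlbred, hlbJ, hlbπ⟩ :=
    exists_reduced_word_of_mem_parabolic cs J (Subgroup.inv_mem _ ha0)
  cases lb with
  | nil =>
    exfalso
    apply hne1
    rw [← hlbπ, cs.wordProd_nil]
  | cons j lb' =>
    refine ⟨j, hlbJ j (List.mem_cons_self), ?_⟩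
    have hz' : z = π (j :: lb') * (a0 * z) := by rw [hlbπ]; group
    have hlb'red : cs.IsReduced lb' := by
      have := CoxeterSystem.IsReduced.drop (ω := j :: lb') hlbred (j := 1)
      simpa using this
    have h1 : ℓ z = (j :: lb').length + ℓ (a0 * z) := by
      have ha : ℓ (π (j :: lb')) = (j :: lb').length := hlbred
      conv_lhs => rw [hz']
      rw [length_parabolic_mul cs J (wordProd_mem_parabolic cs J hlbJ) hminrep, ha]
    have h2 : σ j * z = π lb' * (a0 * z) := by
      conv_lhs => rw [hz', cs.wordProd_cons]
      calc σ j * (σ j * π lb' * (a0 * z))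
          = (σ j * σ j) * (π lb' * (a0 * z)) := by group
        _ = π lb' * (a0 * z) := by rw [cs.simple_mul_simple_self, one_mul]
    have h3 : ℓ (σ j * z) = lb'.length + ℓ (a0 * z) := by
      have hb : ℓ (π lb') = lb'.length := hlb'red
      rw [h2, length_parabolic_mul cs J
        (wordProd_mem_parabolic cs J (fun b hb' => hlbJ b (List.mem_cons_of_mem _ hb')))
        hminrep, hb]
    rw [h1, h3]
    simp

theorem exists_parabolic_decomp (z : W) :
    ∃ (la ly : List B), cs.IsReduced (la ++ ly) ∧ (∀ b ∈ la, b ∈ J) ∧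
      IsMinRep cs J (π ly) ∧ π (la ++ ly) = z := by
  suffices H : ∀ (n : ℕ) (z : W), ℓ z = n → ∃ (la ly : List B), cs.IsReduced (la ++ ly) ∧
      (∀ b ∈ la, b ∈ J) ∧ IsMinRep cs J (π ly) ∧ π (la ++ ly) = z from H (ℓ z) z rfl
  intro n
  induction n using Nat.strong_induction_on with
  | _ n ihn =>
  intro z hn
  by_cases h : IsMinRep cs J z
  · obtain ⟨ly, hred, hπ⟩ := cs.exists_reduced_word' z
    exact ⟨[], ly, by simpa using hred, by simp, by rw [← hπ]; exact h, by simpa using hπ.symm⟩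
  · obtain ⟨j, hjJ, hjlt⟩ := not_minRep_descent cs J h
    obtain ⟨la, ly, hred, hJla, hmin, hπ⟩ := ihn (ℓ (σ j * z)) (by omega) (σ j * z) rfl
    have hzz : π ((j :: la) ++ ly) = z := by
      have : ((j :: la) ++ ly) = j :: (la ++ ly) := rfl
      rw [this, cs.wordProd_cons, hπ, ← mul_assoc, cs.simple_mul_simple_self, one_mul]
    refine ⟨j :: la, ly, ?_, ?_, hmin, hzz⟩
    · show ℓ (π ((j :: la) ++ ly)) = ((j :: la) ++ ly).length
      rw [hzz]
      have hd := cs.length_simple_mul (σ j * z) j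
      rw [← mul_assoc, cs.simple_mul_simple_self, one_mul] at hd
      have hl' : ℓ (σ j * z) = (la ++ ly).length := by rw [← hπ]; exact hred
      have : ((j :: la) ++ ly).length = (la ++ ly).length + 1 := by simp
      omega
    · intro b hb
      rcases List.mem_cons.mp hb with rfl | hb'
      · exact hjJ
      · exact hJla b hb'

theorem minrep_le_of_le {la lv : List B} (hred : cs.IsReduced (la ++ lv))
    (hJ : ∀ b ∈ la, b ∈ J) {y : W} (hy : IsMinRep cs J y)
    (hle : bruhatLE cs y (π (la ++ lv))) : bruhatLE cs y (π lv) := by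
  induction la with
  | nil => simpa using hle
  | cons j la' ih =>
    have hcons : ((j :: la') ++ lv) = j :: (la' ++ lv) := rfl
    have hred' : cs.IsReduced (la' ++ lv) := by
      have := CoxeterSystem.IsReduced.drop (ω := (j :: la') ++ lv) hred (j := 1)
      simpa using this
    have hkey : σ j * π ((j :: la') ++ lv) = π (la' ++ lv) := by
      rw [hcons, cs.wordProd_cons, ← mul_assoc, cs.simple_mul_simple_self, one_mul]
    have hlt : ℓ (σ j * π ((j :: la') ++ lv)) < ℓ (π ((j :: la') ++ lv)) := by
      rw [hkey]
      have h1 : ℓ (π (la' ++ lv)) = (la' ++ lv).length := hred'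
      have h2 : ℓ (π ((j :: la') ++ lv)) = ((j :: la') ++ lv).length := hred
      have h3 : ((j :: la') ++ lv).length = (la' ++ lv).length + 1 := by simp
      omega
    have hjy : ℓ y < ℓ (σ j * y) := by
      have h1 := hy (σ j) (Subgroup.subset_closure ⟨j, hJ j (List.mem_cons_self), rfl⟩)
      have h2 := cs.length_simple_mul_ne y j
      omega
    have := bruhat_lift cs hlt hjy hle
    rw [hkey] at this
    exact ih hred' (fun b hb => hJ b (List.mem_cons_of_mem _ hb)) this


/-! ### Part 5: counting -/

theorem ncard_biUnion {α ι : Type*} [DecidableEq ι] (s : Finset ι) (f : ι → Set α) :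
    (∀ i ∈ s, (f i).Finite) → (∀ i ∈ s, ∀ j ∈ s, i ≠ j → Disjoint (f i) (f j)) →
    (⋃ i ∈ s, f i).ncard = ∑ i ∈ s, (f i).ncard := by
  induction s using Finset.induction_on with
  | empty => intro _ _; simp
  | insert a s h ih =>
    intro hfin hdisj
    rw [Finset.sum_insert h]
    have hU : (⋃ i ∈ insert a s, f i) = f a ∪ ⋃ i ∈ s, f i := by
      simp [Set.biUnion_insert]
    have hdisj2 : Disjoint (f a) (⋃ i ∈ s, f i) := by
      rw [Set.disjoint_left]
      intro x hxa hxu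
      obtain ⟨i, hi, hxi⟩ := Set.mem_iUnion₂.mp hxu
      exact Set.disjoint_left.mp
        (hdisj a (Finset.mem_insert_self a s) i (Finset.mem_insert_of_mem hi)
          (by rintro rfl; exact h hi)) hxa hxi
    have hfa := hfin a (Finset.mem_insert_self a s)
    have hfs : (⋃ i ∈ s, f i).Finite :=
      Set.Finite.biUnion s.finite_toSet (fun i hi => hfin i (Finset.mem_insert_of_mem hi))
    rw [hU, Set.ncard_union_eq hdisj2 hfa hfs,
      ih (fun i hi => hfin i (Finset.mem_insert_of_mem hi))
        (fun i hi j hj hne =>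
          hdisj i (Finset.mem_insert_of_mem hi) j (Finset.mem_insert_of_mem hj) hne)]

theorem ncard_prod_set {α β : Type*} (A : Set α) (B2 : Set β) :
    (A ×ˢ B2).ncard = A.ncard * B2.ncard := by
  rw [← Nat.card_coe_set_eq, Nat.card_congr (Equiv.Set.prod A B2), Nat.card_prod,
    Nat.card_coe_set_eq, Nat.card_coe_set_eq]

/-! ### Part 6: the two directions -/

section Main

variable (J : Set B) (u v : W)

/-- Grade-`j` slice of the interval `[e,u]`. -/
def Apiece (j : ℕ) : Set W := {x | bruhatLE cs x u ∧ cs.length x = j}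

/-- Grade-`k` slice of `[e,v] ∩ W^J`. -/
def Bpiece (k : ℕ) : Set W := {y | bruhatLE cs y v ∧ IsMinRep cs J y ∧ cs.length y = k}

/-- Image of `Apiece j × Bpiece (i - j)` under multiplication. -/
def Dpiece (i j : ℕ) : Set W :=
  (fun p : W × W => p.1 * p.2) '' ((Apiece cs u j) ×ˢ (Bpiece cs J v (i - j)))

/-- Union of the `Dpiece`s. -/
def Upiece (i : ℕ) : Set W := ⋃ j ∈ Finset.range (i + 1), Dpiece cs J u v i j

variable {u v}

theorem mem_parabolic_of_le (hu : u ∈ parabolic cs J) {x : W} (hx : bruhatLE cs x u) :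
    x ∈ parabolic cs J := by
  obtain ⟨ru, hrured, hruJ, hruπ⟩ := exists_reduced_word_of_mem_parabolic cs J hu
  obtain ⟨m, hsub, hmred, hmπ⟩ := bruhat_subword cs hx hrured hruπ
  rw [← hmπ]
  exact wordProd_mem_parabolic cs J (fun b hb => hruJ b (hsub.subset hb))

theorem Dpiece_subset (hu : u ∈ parabolic cs J) (hv : IsMinRep cs J v) {i j : ℕ} (hj : j ≤ i) :
    Dpiece cs J u v i j ⊆ {z | bruhatLE cs z (u * v) ∧ cs.length z = i} := by
  rintro z ⟨⟨x, y⟩, ⟨⟨hxu, hxl⟩, ⟨hyv, hymin, hyl⟩⟩, rfl⟩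
  dsimp only at hxu hxl hyv hymin hyl
  obtain ⟨ru, hrured, hruJ, hruπ⟩ := exists_reduced_word_of_mem_parabolic cs J hu
  obtain ⟨rv, hrvred, hrvπ⟩ := cs.exists_reduced_word' v
  obtain ⟨mx, hmxsub, hmxred, hmxπ⟩ := bruhat_subword cs hxu hrured hruπ
  obtain ⟨my, hmysub, hmyred, hmyπ⟩ := bruhat_subword cs hyv hrvred hrvπ.symm
  have hwred : cs.IsReduced (ru ++ rv) :=
    parabolic_min_reduced cs J hrured hruJ hv hrvred hrvπ.symm
  have hwπ : π (ru ++ rv) = u * v := by rw [cs.wordProd_append, hruπ, ← hrvπ]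
  have hmred : cs.IsReduced (mx ++ my) :=
    parabolic_min_reduced cs J hmxred (fun b hb => hruJ b (hmxsub.subset hb)) hymin hmyred hmyπ
  have hmπ : π (mx ++ my) = x * y := by rw [cs.wordProd_append, hmxπ, hmyπ]
  refine ⟨⟨ru ++ rv, mx ++ my, hwred, hwπ, hmxsub.append hmysub, hmred, hmπ⟩, ?_⟩
  have h1 : ℓ (x * y) = mx.length + my.length := by
    have hh : ℓ (π (mx ++ my)) = (mx ++ my).length := hmred
    rw [hmπ] at hh
    rw [hh, List.length_append]
  have hx2 : ℓ x = mx.length := by rw [← hmxπ]; exact hmxred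
  have hy2 : ℓ y = my.length := by rw [← hmyπ]; exact hmyred
  show ℓ (x * y) = i
  omega

theorem Dpiece_ncard (hu : u ∈ parabolic cs J) (i j : ℕ) :
    (Dpiece cs J u v i j).ncard = coeff cs u j * coeffRel cs J v (i - j) := by
  have hinj : Set.InjOn (fun p : W × W => p.1 * p.2)
      ((Apiece cs u j) ×ˢ (Bpiece cs J v (i - j))) := by
    rintro ⟨x1, y1⟩ ⟨hx1, hy1⟩ ⟨x2, y2⟩ ⟨hx2, hy2⟩ heq
    obtain ⟨hxx, hyy⟩ := parabolic_decomp_unique cs J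
      (mem_parabolic_of_le cs J hu hx1.1) (mem_parabolic_of_le cs J hu hx2.1)
      hy1.2.1 hy2.2.1 heq
    simp only [Prod.mk.injEq]
    exact ⟨hxx, hyy⟩
  rw [Dpiece, Set.ncard_image_of_injOn hinj, ncard_prod_set]
  rfl

theorem Upiece_ncard (hu : u ∈ parabolic cs J) (hv : IsMinRep cs J v) (i : ℕ) :
    (Upiece cs J u v i).ncard
      = ∑ j ∈ Finset.range (i + 1), coeff cs u j * coeffRel cs J v (i - j) := by
  rw [Upiece, ncard_biUnion]
  · exact Finset.sum_congr rfl (fun j _ => Dpiece_ncard cs J hu i j)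
  · intro j hj
    apply Set.Finite.subset (bruhat_finite cs (u * v))
    intro z hz
    exact (Dpiece_subset cs J hu hv (Nat.lt_succ_iff.mp (Finset.mem_range.mp hj)) hz).1
  · intro j hj k hk hne
    rw [Set.disjoint_left]
    rintro z ⟨⟨x1, y1⟩, ⟨hx1, hy1⟩, heq1⟩ ⟨⟨x2, y2⟩, ⟨hx2, hy2⟩, heq2⟩
    dsimp only at heq1 heq2 hx1 hx2 hy1 hy2
    have heq : x1 * y1 = x2 * y2 := by rw [heq1, heq2]
    obtain ⟨hxx, -⟩ := parabolic_decomp_unique cs J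
      (mem_parabolic_of_le cs J hu hx1.1) (mem_parabolic_of_le cs J hu hx2.1)
      hy1.2.1 hy2.2.1 heq
    exact hne (by rw [← hx1.2, ← hx2.2, hxx])

theorem interval_sub_Upiece (hu : u ∈ parabolic cs J) (hv : IsMinRep cs J v)
    (hmax : ∀ x : W, bruhatLE cs x (u * v) → x ∈ parabolic cs J → bruhatLE cs x u) (i : ℕ) :
    {z | bruhatLE cs z (u * v) ∧ cs.length z = i} ⊆ Upiece cs J u v i := by
  rintro z ⟨hzw, hzl⟩
  obtain ⟨la, ly, hred, hJla, hmin, hπz⟩ := exists_parabolic_decomp cs J z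
  have hlared : cs.IsReduced la := by
    have := CoxeterSystem.IsReduced.take (ω := la ++ ly) hred (j := la.length)
    rwa [List.take_left] at this
  have hlyred : cs.IsReduced ly := by
    have := CoxeterSystem.IsReduced.drop (ω := la ++ ly) hred (j := la.length)
    rwa [List.drop_left] at this
  have hxz : bruhatLE cs (π la) z :=
    ⟨la ++ ly, la, hred, hπz, List.sublist_append_left la ly, hlared, rfl⟩
  have hyz : bruhatLE cs (π ly) z :=
    ⟨la ++ ly, ly, hred, hπz, List.sublist_append_right la ly, hlyred, rfl⟩
  have hxu : bruhatLE cs (π la) u :=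
    hmax _ (bruhat_trans cs hxz hzw) (wordProd_mem_parabolic cs J hJla)
  obtain ⟨ru, hrured, hruJ, hruπ⟩ := exists_reduced_word_of_mem_parabolic cs J hu
  obtain ⟨rv, hrvred, hrvπ⟩ := cs.exists_reduced_word' v
  have hwred : cs.IsReduced (ru ++ rv) :=
    parabolic_min_reduced cs J hrured hruJ hv hrvred hrvπ.symm
  have hwπ : π (ru ++ rv) = u * v := by rw [cs.wordProd_append, hruπ, ← hrvπ]
  have hyw' : bruhatLE cs (π ly) (π (ru ++ rv)) := by
    rw [hwπ]
    exact bruhat_trans cs hyz hzw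
  have hyv : bruhatLE cs (π ly) v := by
    have := minrep_le_of_le cs J hwred hruJ hmin hyw'
    rwa [← hrvπ] at this
  have hzlen : ℓ z = la.length + ly.length := by
    have hh : ℓ (π (la ++ ly)) = (la ++ ly).length := hred
    rw [hπz] at hh
    rw [hh, List.length_append]
  have hxlen : ℓ (π la) = la.length := hlared
  have hylen : ℓ (π ly) = ly.length := hlyred
  refine Set.mem_iUnion₂.mpr ⟨la.length, Finset.mem_range.mpr (by omega),
    ⟨(π la, π ly), ⟨⟨hxu, hxlen⟩, ⟨hyv, hmin, ?_⟩⟩, ?_⟩⟩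
  · show ℓ (π ly) = i - la.length
    omega
  · show π la * π ly = z
    rw [← cs.wordProd_append, hπz]

theorem main_forward (hu : u ∈ parabolic cs J) (hv : IsMinRep cs J v)
    (hmax : ∀ x : W, bruhatLE cs x (u * v) → x ∈ parabolic cs J → bruhatLE cs x u) (i : ℕ) :
    coeff cs (u * v) i = ∑ j ∈ Finset.range (i + 1), coeff cs u j * coeffRel cs J v (i - j) := by
  have hset : {z | bruhatLE cs z (u * v) ∧ cs.length z = i} = Upiece cs J u v i :=
    Set.Subset.antisymm (interval_sub_Upiece cs J hu hv hmax i)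
      (Set.iUnion₂_subset (fun j hj =>
        Dpiece_subset cs J hu hv (Nat.lt_succ_iff.mp (Finset.mem_range.mp hj))))
  show ({z | bruhatLE cs z (u * v) ∧ cs.length z = i}).ncard = _
  rw [hset, Upiece_ncard cs J hu hv i]

theorem u_le_mul (hu : u ∈ parabolic cs J) (hv : IsMinRep cs J v) :
    bruhatLE cs u (u * v) := by
  obtain ⟨ru, hrured, hruJ, hruπ⟩ := exists_reduced_word_of_mem_parabolic cs J hu
  obtain ⟨rv, hrvred, hrvπ⟩ := cs.exists_reduced_word' v
  have hwred : cs.IsReduced (ru ++ rv) :=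
    parabolic_min_reduced cs J hrured hruJ hv hrvred hrvπ.symm
  have hwπ : π (ru ++ rv) = u * v := by rw [cs.wordProd_append, hruπ, ← hrvπ]
  exact ⟨ru ++ rv, ru, hwred, hwπ, List.sublist_append_left ru rv, hrured, hruπ⟩

theorem main_backward (hu : u ∈ parabolic cs J) (hv : IsMinRep cs J v)
    (hcoeff : ∀ i : ℕ, coeff cs (u * v) i
      = ∑ j ∈ Finset.range (i + 1), coeff cs u j * coeffRel cs J v (i - j)) :
    ∀ x : W, bruhatLE cs x (u * v) → x ∈ parabolic cs J → bruhatLE cs x u := by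
  intro x hxw hxp
  set i := ℓ x with hi
  have hsubU : Upiece cs J u v i ⊆ {z | bruhatLE cs z (u * v) ∧ cs.length z = i} :=
    Set.iUnion₂_subset (fun j hj =>
      Dpiece_subset cs J hu hv (Nat.lt_succ_iff.mp (Finset.mem_range.mp hj)))
  have hcard : ({z | bruhatLE cs z (u * v) ∧ cs.length z = i}).ncard
      ≤ (Upiece cs J u v i).ncard := by
    rw [Upiece_ncard cs J hu hv i]
    exact le_of_eq (hcoeff i)
  have hCfin : ({z | bruhatLE cs z (u * v) ∧ cs.length z = i}).Finite :=
    Set.Finite.subset (bruhat_finite cs (u * v)) (fun z hz => hz.1)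
  have hEq : Upiece cs J u v i = {z | bruhatLE cs z (u * v) ∧ cs.length z = i} :=
    Set.eq_of_subset_of_ncard_le hsubU hcard hCfin
  have hxC : x ∈ {z | bruhatLE cs z (u * v) ∧ cs.length z = i} := ⟨hxw, rfl⟩
  rw [← hEq] at hxC
  obtain ⟨j, hj, hxin⟩ := Set.mem_iUnion₂.mp hxC
  obtain ⟨⟨x1, y1⟩, ⟨hx1, hy1⟩, heq⟩ := hxin
  have h1x : x1 ∈ parabolic cs J := mem_parabolic_of_le cs J hu hx1.1
  have huniq := parabolic_decomp_unique cs J h1x hxp hy1.2.1 (minRep_one cs J)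
    (by rw [mul_one]; exact heq)
  rw [← huniq.1]
  exact hx1.1

end Main

end Aux
end TriAvoid


namespace TriAvoid

/-- **Proposition 2.2 (Billey–Postnikov).** Let `J ⊆ S` and let `w = uv` be a parabolic
decomposition with respect to `J`. Then `u` is the unique maximal element of `[e,w] ∩ W_J`
if and only if `P_w(q) = P_u(q) · P_v^J(q)` (stated coefficientwise as a Cauchy product). -/
theorem isMax_iff_poincare_factors
    {B W : Type*} [Finite B] [Group W] {M : CoxeterMatrix B} (cs : CoxeterSystem M W)
    (J : Set B) (u v : W) (hpd : IsParabolicDecomp cs J u v) :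
    (bruhatLE cs u (u * v) ∧
        ∀ x : W, bruhatLE cs x (u * v) → x ∈ parabolic cs J → bruhatLE cs x u) ↔
      ∀ i : ℕ, coeff cs (u * v) i =
        ∑ j ∈ Finset.range (i + 1), coeff cs u j * coeffRel cs J v (i - j) := by
  obtain ⟨hu, hv, hlen⟩ := hpd
  constructor
  · rintro ⟨-, hmax⟩ i
    exact Aux.main_forward cs J hu hv hmax i
  · intro hcoeff
    exact ⟨Aux.u_le_mul cs J hu hv, Aux.main_backward cs J hu hv hcoeff⟩

end TriAvoid
end

section
/- Let (W,S) be any Coxeter system with S finite, and let J_1 ⊆ J_2 ⊆ S. Suppose w = v_1 v_2 v_3 is a reduced factorization (ℓ(w) = ℓ(v_1)+ℓ(v_2)+ℓ(v_3)) such that v_1 v_2 = (v_1)(v_2) is a BP-decomposition with respect to J_1 and w = (v_1 v_2)(v_3) is a BP-decomposition with respect to J_2. Then w = (v_1)(v_2 v_3) is a BP-decomposition with respect to J_1. -/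
set_option linter.unusedSectionVars false

namespace TriAvoid

noncomputable section StrongExchange

open CoxeterSystem List

variable {B W : Type*} [Group W] {M : CoxeterMatrix B} (cs : CoxeterSystem M W)

local prefix:100 "σ" => cs.simple
local prefix:100 "π" => cs.wordProd
local prefix:100 "ℓ" => cs.length

private lemma zmod2_add_self (x : ZMod 2) : x + x = 0 := by revert x; decide

private lemma zmod2_eq_of_add_eq_zero {a b : ZMod 2} (h : a + b = 0) : a = b := by
  revert h; revert a b; decide

/-- Indicator function with values in `ZMod 2`. -/
private def ind (t u : W) : ZMod 2 :=
  haveI := Classical.dec (t = u)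
  if t = u then 1 else 0

private lemma ind_congr {a b c d : W} (h : (a = b) ↔ (c = d)) : ind a b = ind c d := by
  unfold ind
  split_ifs with h1 h2 h2
  · rfl
  · exact absurd (h.mp h1) h2
  · exact absurd (h.mpr h2) h1
  · rfl

private lemma ind_self (a : W) : ind a a = 1 := by simp [ind]

private lemma ind_of_ne {a b : W} (h : a ≠ b) : ind a b = 0 := by simp [ind, h]

/-- Sum of indicators of membership in a list. -/
private def indsum (t : W) (l : List W) : ZMod 2 := (l.map (ind t)).sum

private lemma indsum_cons (t u : W) (l : List W) :
    indsum t (u :: l) = ind t u + indsum t l := by simp [indsum]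

private lemma indsum_eq_zero {t : W} {l : List W} (h : t ∉ l) : indsum t l = 0 := by
  induction l with
  | nil => rfl
  | cons u l ih =>
    rw [indsum_cons, ind_of_ne (by rintro rfl; exact h mem_cons_self),
      ih (fun hm => h (mem_cons_of_mem _ hm)), add_zero]

/-- The basic permutation of `W × ZMod 2` associated to a simple reflection. -/
private def etaFun (i : B) (p : W × ZMod 2) : W × ZMod 2 :=
  (σ i * p.1 * σ i, p.2 + ind p.1 (σ i))

private lemma etaFun_invol (i : B) : Function.Involutive (etaFun cs i) := by
  rintro ⟨t, ε⟩
  unfold etaFun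
  refine Prod.ext ?_ ?_
  · dsimp only
    simp [mul_assoc, cs.simple_mul_simple_cancel_left, cs.simple_mul_simple_self]
  · dsimp only
    have hiff : σ i * t * σ i = σ i ↔ t = σ i := by
      constructor
      · intro h
        have h2 := congrArg (fun x => σ i * x * σ i) h
        simpa [mul_assoc, cs.simple_mul_simple_cancel_left, cs.simple_mul_simple_self] using h2
      · rintro rfl; rw [cs.simple_mul_simple_self, one_mul]
    rw [ind_congr hiff, add_assoc, zmod2_add_self, add_zero]

private def eta (i : B) : Equiv.Perm (W × ZMod 2) := (etaFun_invol cs i).toPerm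

private lemma eta_apply (i : B) (p : W × ZMod 2) :
    eta cs i p = (σ i * p.1 * σ i, p.2 + ind p.1 (σ i)) := rfl

private lemma conj_eq_iff (g a b : W) : g * a * g⁻¹ = b ↔ a = g⁻¹ * b * g := by
  constructor
  · intro h; rw [← h]; group
  · intro h; rw [h]; group

private lemma sum_range_add' (g : ℕ → ZMod 2) (a b : ℕ) :
    ∑ l ∈ Finset.range (a + b), g l
      = (∑ l ∈ Finset.range a, g l) + ∑ l ∈ Finset.range b, g (a + l) := by
  induction b with
  | zero => simp
  | succ b ihb =>
    rw [show a + (b + 1) = (a + b) + 1 by omega, Finset.sum_range_succ, ihb,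
      Finset.sum_range_succ, add_assoc]

private lemma eta_mul_pow_apply (i j : B) (k : ℕ) (p : W × ZMod 2) :
    ((eta cs i * eta cs j) ^ k) p =
      ((σ i * σ j) ^ k * p.1 * (σ j * σ i) ^ k,
        p.2 + ∑ l ∈ Finset.range (2 * k), ind p.1 ((σ j * σ i) ^ l * σ j)) := by
  induction k generalizing p with
  | zero => simp
  | succ k ih =>
    have hstep : (eta cs i * eta cs j) p = (σ i * σ j * p.1 * (σ j * σ i),
        p.2 + (ind p.1 (σ j) + ind p.1 (σ j * σ i * σ j))) := by
      rw [Equiv.Perm.mul_apply, eta_apply, eta_apply]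
      refine Prod.ext ?_ ?_
      · dsimp only; simp [mul_assoc]
      · dsimp only
        have hiff : σ j * p.1 * σ j = σ i ↔ p.1 = σ j * σ i * σ j := by
          rw [show σ j * p.1 * σ j = σ j * p.1 * (σ j)⁻¹ by rw [cs.inv_simple],
            conj_eq_iff, cs.inv_simple, mul_assoc]
        rw [ind_congr hiff, add_assoc]
    rw [pow_succ, Equiv.Perm.mul_apply, hstep, ih]
    refine Prod.ext ?_ ?_
    · dsimp only
      rw [pow_succ (σ i * σ j) k, pow_succ' (σ j * σ i) k]
      simp [mul_assoc]
    · dsimp only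
      have hindc : ∀ l : ℕ, ind (σ i * σ j * p.1 * (σ j * σ i)) ((σ j * σ i) ^ l * σ j)
          = ind p.1 ((σ j * σ i) ^ (l + 2) * σ j) := by
        intro l
        apply ind_congr
        have hinv : (σ i * σ j)⁻¹ = σ j * σ i := by
          rw [mul_inv_rev, cs.inv_simple, cs.inv_simple]
        have hinv' : (σ j * σ i)⁻¹ = σ i * σ j := by
          rw [mul_inv_rev, cs.inv_simple, cs.inv_simple]
        constructor
        · intro h
          have h2 := congrArg (fun z => (σ j * σ i) * z * (σ i * σ j)) h
          have hl : σ j * σ i * (σ i * σ j * p.1 * (σ j * σ i)) * (σ i * σ j) = p.1 := by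
            simp [mul_assoc, cs.simple_mul_simple_cancel_left, cs.simple_mul_simple_self]
          rw [hl] at h2
          rw [h2]
          calc (σ j * σ i) * ((σ j * σ i) ^ l * σ j) * (σ i * σ j)
              = (σ j * σ i) ^ (l + 1) * (σ j * (σ i * σ j)) := by
                rw [← mul_assoc (σ j * σ i) ((σ j * σ i) ^ l) (σ j), ← pow_succ', mul_assoc]
            _ = (σ j * σ i) ^ (l + 1) * ((σ j * σ i) * σ j) := by
                rw [← mul_assoc (σ j) (σ i) (σ j)]
            _ = (σ j * σ i) ^ (l + 2) * σ j := by
                rw [← mul_assoc, ← pow_succ]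
        · intro h
          rw [h]
          calc σ i * σ j * ((σ j * σ i) ^ (l + 2) * σ j) * (σ j * σ i)
              = σ i * σ j * ((σ j * σ i) * ((σ j * σ i) ^ (l + 1) * σ j)) * (σ j * σ i) := by
                rw [← mul_assoc (σ j * σ i), ← pow_succ']
            _ = (σ j * σ i) ^ (l + 1) * σ j * (σ j * σ i) := by
                simp [mul_assoc, cs.simple_mul_simple_cancel_left]
            _ = (σ j * σ i) ^ l * σ j := by
                rw [pow_succ]
                simp [mul_assoc, cs.simple_mul_simple_cancel_left]
      simp only [hindc]
      rw [show 2 * (k + 1) = (2 * k + 1) + 1 by omega]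
      rw [Finset.sum_range_succ' (fun l => ind p.1 ((σ j * σ i) ^ l * σ j)) (2 * k + 1)]
      rw [Finset.sum_range_succ' (fun l => ind p.1 ((σ j * σ i) ^ (l + 1) * σ j)) (2 * k)]
      simp only [pow_zero, one_mul, pow_one, add_assoc,
        show (1:ℕ) + 1 = 2 from rfl]
      have e1 : (σ j * σ i) ^ 1 * σ j = σ j * σ i * σ j := by rw [pow_one]
      rw [e1]
      ring

private lemma eta_liftable : M.IsLiftable (fun i => eta cs i) := by
  intro i j
  apply Equiv.ext
  intro p
  rw [eta_mul_pow_apply cs i j (M i j) p]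
  have h1 : (σ i * σ j) ^ M i j = 1 := cs.simple_mul_simple_pow i j
  have h2 : (σ j * σ i) ^ M i j = 1 := cs.simple_mul_simple_pow' i j
  have hsum : ∑ l ∈ Finset.range (2 * M i j), ind p.1 ((σ j * σ i) ^ l * σ j) = 0 := by
    rw [two_mul, sum_range_add']
    have : ∀ l ∈ Finset.range (M i j),
        ind p.1 ((σ j * σ i) ^ (M i j + l) * σ j) = ind p.1 ((σ j * σ i) ^ l * σ j) := by
      intro l _
      rw [pow_add, h2, one_mul]
    rw [Finset.sum_congr rfl this, zmod2_add_self]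
  rw [h1, h2, hsum, one_mul, mul_one, add_zero]
  rfl

/-- The Bourbaki homomorphism `W →* Perm (W × ZMod 2)`. -/
private def FF : W →* Equiv.Perm (W × ZMod 2) :=
  cs.lift ⟨fun i => eta cs i, eta_liftable cs⟩

private lemma FF_simple (i : B) : FF cs (σ i) = eta cs i :=
  cs.lift_apply_simple (eta_liftable cs) i

private lemma FF_wordProd (ω : List B) (t : W) (ε : ZMod 2) :
    FF cs (π ω) (t, ε) = ((π ω) * t * (π ω)⁻¹, ε + indsum t (cs.rightInvSeq ω)) := by
  induction ω generalizing ε with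
  | nil => simp [indsum]
  | cons i ω ih =>
    rw [wordProd_cons, map_mul, Equiv.Perm.mul_apply, ih, FF_simple, eta_apply]
    have hris : cs.rightInvSeq (i :: ω) = ((π ω)⁻¹ * σ i * (π ω)) :: cs.rightInvSeq ω := rfl
    rw [hris, indsum_cons]
    refine Prod.ext ?_ ?_
    · dsimp only
      rw [mul_inv_rev, cs.inv_simple]
      simp [mul_assoc]
    · dsimp only
      rw [ind_congr (conj_eq_iff (π ω) t (σ i))]
      ring

/-- The reflection cocycle. -/
private def mu (w t : W) : ZMod 2 := ((FF cs w) (t, 0)).2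

private lemma mu_wordProd (ω : List B) (t : W) :
    mu cs (π ω) t = indsum t (cs.rightInvSeq ω) := by
  rw [mu, FF_wordProd, zero_add]

private lemma FF_apply (w t : W) (ε : ZMod 2) :
    FF cs w (t, ε) = (w * t * w⁻¹, ε + mu cs w t) := by
  obtain ⟨ω, rfl⟩ := cs.wordProd_surjective w
  rw [FF_wordProd, mu_wordProd]

private lemma mu_mul (u v t : W) :
    mu cs (u * v) t = mu cs u (v * t * v⁻¹) + mu cs v t := by
  have h : FF cs (u * v) (t, 0) = FF cs u (FF cs v (t, 0)) := by
    rw [map_mul, Equiv.Perm.mul_apply]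
  rw [FF_apply cs v t 0, zero_add] at h
  rw [FF_apply cs u (v * t * v⁻¹) (mu cs v t)] at h
  have := congrArg Prod.snd h
  rw [mu, this]
  dsimp only
  ring

private lemma mu_one (t : W) : mu cs 1 t = 0 := by
  rw [mu, map_one]
  rfl

private lemma mu_inv (u t : W) : mu cs u⁻¹ t = mu cs u (u⁻¹ * t * u) := by
  have h := mu_mul cs u u⁻¹ t
  rw [mul_inv_cancel, mu_one, inv_inv] at h
  exact (zmod2_eq_of_add_eq_zero h.symm).symm

private lemma mu_simple (i : B) (t : W) : mu cs (σ i) t = ind t (σ i) := by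
  have h := mu_wordProd cs [i] t
  rw [cs.wordProd_singleton] at h
  rw [h, rightInvSeq_singleton, indsum_cons]
  have : indsum t ([] : List W) = 0 := rfl
  rw [this, add_zero]

private lemma mu_reflection_self {t : W} (ht : cs.IsReflection t) : mu cs t t = 1 := by
  obtain ⟨u, i, rfl⟩ := ht
  have h1 : u * σ i * u⁻¹ = u * (σ i * u⁻¹) := by rw [mul_assoc]
  rw [h1, mu_mul, mu_mul, mu_inv]
  have e1 : (σ i * u⁻¹) * (u * (σ i * u⁻¹)) * (σ i * u⁻¹)⁻¹ = σ i := by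
    rw [mul_inv_rev, cs.inv_simple, inv_inv]
    simp [mul_assoc, cs.simple_mul_simple_cancel_left]
  have e2 : u⁻¹ * (u * (σ i * u⁻¹)) * u⁻¹⁻¹ = σ i := by
    rw [inv_inv]
    simp [mul_assoc]
  have e3 : u⁻¹ * (u * (σ i * u⁻¹)) * u = σ i := by
    simp [mul_assoc]
  rw [e1, e2, e3, mu_simple, ind_self]
  have : ∀ a : ZMod 2, a + (1 + a) = 1 := by decide
  exact this _

private lemma mu_inv_wordProd_eq_zero_of_not_mem {t : W} {ω : List B}
    (h : t ∉ cs.leftInvSeq ω) : mu cs (π ω)⁻¹ t = 0 := by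
  rw [← cs.wordProd_reverse, mu_wordProd, cs.rightInvSeq_reverse]
  exact indsum_eq_zero (by simpa using h)

private lemma eraseIdx_of_mem_leftInvSeq {t : W} {ω : List B} (h : t ∈ cs.leftInvSeq ω) :
    ∃ j < ω.length, t * π ω = π (ω.eraseIdx j) := by
  obtain ⟨j, hj, hget⟩ := List.getElem_of_mem h
  have hj' : j < ω.length := by
    have := cs.length_leftInvSeq ω
    omega
  refine ⟨j, hj', ?_⟩
  have := cs.getD_leftInvSeq_mul_wordProd ω j
  rwa [List.getD_eq_getElem _ _ hj, hget] at this

/-- **Strong exchange property.** -/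
private lemma strong_exchange {t w : W} (ht : cs.IsReflection t) {ω : List B}
    (hω : cs.IsReduced ω) (hprod : cs.wordProd ω = w)
    (hlt : cs.length (t * w) < cs.length w) :
    ∃ j < ω.length, t * w = cs.wordProd (ω.eraseIdx j) := by
  have hmem : t ∈ cs.leftInvSeq ω := by
    by_contra hnot
    have h0 : mu cs w⁻¹ t = 0 := by
      rw [← hprod]; exact mu_inv_wordProd_eq_zero_of_not_mem cs hnot
    have h1 : mu cs (t * w)⁻¹ t = 1 := by
      rw [mul_inv_rev, ht.inv, mu_mul]
      have e : t * t * t⁻¹ = t := by rw [ht.inv, ht.mul_self, one_mul]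
      rw [e, h0, zero_add, mu_reflection_self cs ht]
    obtain ⟨τ, hτred, hτ⟩ := cs.exists_reduced_word' (t * w)
    have hmem2 : t ∈ cs.leftInvSeq τ := by
      by_contra h2
      have := mu_inv_wordProd_eq_zero_of_not_mem cs h2
      rw [← hτ] at this
      rw [this] at h1
      exact one_ne_zero h1.symm
    obtain ⟨j, hj, heq⟩ := eraseIdx_of_mem_leftInvSeq cs hmem2
    have hw : w = π (τ.eraseIdx j) := by
      rw [← heq, ← hτ, ← mul_assoc, ht.mul_self, one_mul]
    have hlen1 : cs.length w ≤ (τ.eraseIdx j).length := by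
      rw [hw]; exact cs.length_wordProd_le _
    have hlen2 : (τ.eraseIdx j).length = τ.length - 1 := by
      rw [List.length_eraseIdx, if_pos hj]
    have hlen3 : τ.length = cs.length (t * w) := by rw [hτ]; exact hτred.symm
    omega
  obtain ⟨j, hj, heq⟩ := eraseIdx_of_mem_leftInvSeq cs hmem
  rw [hprod] at heq
  exact ⟨j, hj, heq⟩

end StrongExchange


section BPLemmas

open CoxeterSystem List

variable {B W : Type*} [Group W] {M : CoxeterMatrix B} (cs : CoxeterSystem M W)

local prefix:100 "σ" => cs.simple
local prefix:100 "π" => cs.wordProd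
local prefix:100 "ℓ" => cs.length

private lemma simple_mem_parabolic {J : Set B} {i : B} (hi : i ∈ J) :
    σ i ∈ parabolic cs J :=
  Subgroup.subset_closure ⟨i, hi, rfl⟩

private lemma wordProd_mem_parabolic {J : Set B} {l : List B} (h : ∀ i ∈ l, i ∈ J) :
    π l ∈ parabolic cs J := by
  induction l with
  | nil => rw [cs.wordProd_nil]; exact one_mem _
  | cons i l ih =>
    rw [cs.wordProd_cons]
    exact mul_mem (simple_mem_parabolic cs (h i List.mem_cons_self))
      (ih fun j hj => h j (List.mem_cons_of_mem _ hj))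

private lemma mem_parabolic_iff {J : Set B} {u : W} :
    u ∈ parabolic cs J ↔ ∃ l : List B, (∀ i ∈ l, i ∈ J) ∧ π l = u := by
  constructor
  · intro hu
    induction hu using Subgroup.closure_induction with
    | mem x hx =>
      obtain ⟨i, hi, rfl⟩ := hx
      exact ⟨[i], by simpa using hi, cs.wordProd_singleton i⟩
    | one => exact ⟨[], by simp, cs.wordProd_nil⟩
    | mul x y hx hy ihx ihy =>
      obtain ⟨lx, hlx, rfl⟩ := ihx
      obtain ⟨ly, hly, rfl⟩ := ihy
      exact ⟨lx ++ ly, fun i hi => (List.mem_append.mp hi).elim (hlx i) (hly i),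
        cs.wordProd_append lx ly⟩
    | inv x hx ihx =>
      obtain ⟨lx, hlx, rfl⟩ := ihx
      exact ⟨lx.reverse, fun i hi => hlx i (List.mem_reverse.mp hi), cs.wordProd_reverse lx⟩
  · rintro ⟨l, hl, rfl⟩
    exact wordProd_mem_parabolic cs hl

/-- The key lemma: if `z` has minimal length in its coset `W_J z`, then lengths add,
and every `J`-word has a reduced `J`-word representing the same element. -/
private lemma parabolic_word_key {J : Set B} {z : W}
    (hz : ∀ u ∈ parabolic cs J, ℓ z ≤ ℓ (u * z)) :
    ∀ (n : ℕ) (l : List B), l.length ≤ n → (∀ i ∈ l, i ∈ J) →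
      ℓ (π l * z) = ℓ (π l) + ℓ z ∧
      ∃ m : List B, (∀ i ∈ m, i ∈ J) ∧ cs.IsReduced m ∧ π m = π l := by
  intro n
  induction n with
  | zero =>
    intro l hlen _
    have hnil : l = [] := List.length_eq_zero_iff.mp (Nat.le_zero.mp hlen)
    subst hnil
    exact ⟨by simp, [], by simp, by simp [CoxeterSystem.IsReduced], rfl⟩
  | succ n ih =>
    intro l hlen hJw
    cases l with
    | nil => exact ⟨by simp, [], by simp, by simp [CoxeterSystem.IsReduced], rfl⟩
    | cons i l' =>
      have hJl' : ∀ j ∈ l', j ∈ J := fun j hj => hJw j (List.mem_cons_of_mem _ hj)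
      have hiJ : i ∈ J := hJw i List.mem_cons_self
      have hl'len : l'.length ≤ n := by
        rw [List.length_cons] at hlen; omega
      obtain ⟨h1, m', hm'J, hm'red, hm'prod⟩ := ih l' hl'len hJl'
      have hu'le : ℓ (π l') ≤ l'.length := cs.length_wordProd_le l'
      have hm'len : m'.length = ℓ (π l') := by
        have h2 : ℓ (π m') = m'.length := hm'red
        rw [← h2, hm'prod]
      rcases cs.length_simple_mul (π l' * z) i with hup | hdown
      · -- ascent case
        have heq0 : σ i * (π l' * z) = (σ i * π l') * z := (mul_assoc _ _ _).symm
        have hle1 : ℓ (σ i * π l') ≤ ℓ (π l') + 1 := by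
          rcases cs.length_simple_mul (π l') i with h | h <;> omega
        have hle2 : ℓ ((σ i * π l') * z) ≤ ℓ (σ i * π l') + ℓ z := cs.length_mul_le _ _
        rw [heq0] at hup
        have hsl : ℓ (σ i * π l') = ℓ (π l') + 1 := by omega
        constructor
        · rw [cs.wordProd_cons, hup, h1, hsl]
          omega
        · refine ⟨i :: m', ?_, ?_, ?_⟩
          · intro j hj
            rcases List.mem_cons.mp hj with h | h
            · exact h ▸ hiJ
            · exact hm'J j h
          · show ℓ (π (i :: m')) = (i :: m').length
            rw [cs.wordProd_cons, hm'prod, hsl, List.length_cons, hm'len]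
          · rw [cs.wordProd_cons, cs.wordProd_cons, hm'prod]
      · -- descent case: use strong exchange
        obtain ⟨τ, hτred, hτ⟩ := cs.exists_reduced_word' z
        have hτlen : τ.length = ℓ z := by
          have h2 : ℓ (π τ) = τ.length := hτred
          rw [← h2, ← hτ]
        have happ : π (m' ++ τ) = π l' * z := by
          rw [cs.wordProd_append, hm'prod, ← hτ]
        have hredapp : cs.IsReduced (m' ++ τ) := by
          show ℓ (π (m' ++ τ)) = (m' ++ τ).length
          rw [happ, h1, List.length_append, hm'len, hτlen]
        have hlt : ℓ (σ i * (π l' * z)) < ℓ (π l' * z) := by omega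
        obtain ⟨j, hj, heq⟩ := strong_exchange cs (cs.isReflection_simple i) hredapp happ hlt
        rw [List.length_append] at hj
        by_cases hcase : j < m'.length
        · rw [List.eraseIdx_append_of_lt_length hcase, cs.wordProd_append, ← hτ] at heq
          have hsu : σ i * π l' = π (m'.eraseIdx j) := by
            have h3 : (σ i * π l') * z = π (m'.eraseIdx j) * z := by
              rw [mul_assoc]; exact heq
            exact mul_right_cancel h3
          have hJm'' : ∀ i' ∈ m'.eraseIdx j, i' ∈ J := fun i' hi' =>
            hm'J i' ((List.eraseIdx_sublist m' j).subset hi')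
          have hm''len : (m'.eraseIdx j).length ≤ n := by
            rw [List.length_eraseIdx, if_pos hcase]; omega
          obtain ⟨h1'', m'', hm''J, hm''red, hm''prod⟩ := ih (m'.eraseIdx j) hm''len hJm''
          have hwc : π (i :: l') = π (m'.eraseIdx j) := by rw [cs.wordProd_cons, hsu]
          constructor
          · rw [hwc]; exact h1''
          · exact ⟨m'', hm''J, hm''red, by rw [hm''prod, hwc]⟩
        · push_neg at hcase
          rw [List.eraseIdx_append_of_length_le hcase, cs.wordProd_append, hm'prod] at heq
          exfalso
          have htz : ((π l')⁻¹ * σ i * π l') * z = π (τ.eraseIdx (j - m'.length)) := by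
            have h4 : ((π l')⁻¹ * σ i * π l') * z = (π l')⁻¹ * (σ i * (π l' * z)) := by group
            rw [h4, heq, inv_mul_cancel_left]
          have htP : (π l')⁻¹ * σ i * π l' ∈ parabolic cs J :=
            mul_mem (mul_mem (inv_mem (wordProd_mem_parabolic cs hJl'))
              (simple_mem_parabolic cs hiJ)) (wordProd_mem_parabolic cs hJl')
          have hle : ℓ (((π l')⁻¹ * σ i * π l') * z) ≤ (τ.eraseIdx (j - m'.length)).length := by
            rw [htz]; exact cs.length_wordProd_le _
          have hjτ : j - m'.length < τ.length := by omega
          rw [List.length_eraseIdx, if_pos hjτ] at hle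
          have hge := hz _ htP
          omega

end BPLemmas

end TriAvoid

namespace TriAvoid

/-- **Lemma 2.4.** Let `J₁ ⊆ J₂ ⊆ S` and let `v₁ v₂ v₃` be a reduced factorization such that
`(v₁)(v₂)` is a BP-decomposition with respect to `J₁` and `(v₁ v₂)(v₃)` is a BP-decomposition
with respect to `J₂`. Then `(v₁)(v₂ v₃)` is a BP-decomposition with respect to `J₁`. -/
theorem isBP_assoc
    {B W : Type*} [Finite B] [Group W] {M : CoxeterMatrix B} (cs : CoxeterSystem M W)
    (J₁ J₂ : Set B) (hJ : J₁ ⊆ J₂) (v₁ v₂ v₃ : W)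
    (hred : cs.length (v₁ * v₂ * v₃) = cs.length v₁ + cs.length v₂ + cs.length v₃)
    (h₁ : IsBP cs J₁ v₁ v₂) (h₂ : IsBP cs J₂ (v₁ * v₂) v₃) :
    IsBP cs J₁ v₁ (v₂ * v₃) := by
  obtain ⟨⟨hv₁P, hv₂min, hlen12⟩, hble1, hmax1⟩ := h₁
  obtain ⟨⟨hv₁₂P, hv₃min, hlen123⟩, hble2, hmax2⟩ := h₂
  have hsub23 := cs.length_mul_le v₂ v₃
  have hsub1_23 := cs.length_mul_le v₁ (v₂ * v₃)
  have hassoc : v₁ * (v₂ * v₃) = v₁ * v₂ * v₃ := (mul_assoc _ _ _).symm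
  rw [hassoc] at hsub1_23
  have hlen23 : cs.length (v₂ * v₃) = cs.length v₂ + cs.length v₃ := by omega
  have hlen1_23 : cs.length (v₁ * (v₂ * v₃)) = cs.length v₁ + cs.length (v₂ * v₃) := by
    rw [hassoc]; omega
  have hP12 : parabolic cs J₁ ≤ parabolic cs J₂ :=
    Subgroup.closure_mono (Set.image_mono hJ)
  have hminrep : IsMinRep cs J₁ (v₂ * v₃) := by
    set Sn : Set ℕ := {n | ∃ u ∈ parabolic cs J₁, cs.length (u * (v₂ * v₃)) = n} with hSn
    have hne : Sn.Nonempty := ⟨cs.length (1 * (v₂ * v₃)), 1, one_mem _, rfl⟩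
    obtain ⟨u₀, hu₀P, hu₀len⟩ := Nat.sInf_mem hne
    have hmin : ∀ u ∈ parabolic cs J₁,
        cs.length (u₀ * (v₂ * v₃)) ≤ cs.length (u * (v₂ * v₃)) := by
      intro u hu
      rw [hu₀len]
      exact Nat.sInf_le ⟨u, hu, rfl⟩
    have hz : ∀ u ∈ parabolic cs J₁,
        cs.length (u₀ * (v₂ * v₃)) ≤ cs.length (u * (u₀ * (v₂ * v₃))) := by
      intro u hu
      rw [← mul_assoc u u₀ (v₂ * v₃)]
      exact hmin (u * u₀) (mul_mem hu hu₀P)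
    obtain ⟨l₀, hl₀J, hl₀prod⟩ := (mem_parabolic_iff cs).mp (inv_mem hu₀P)
    obtain ⟨hA, m₀, hm₀J, hm₀red, hm₀prod⟩ :=
      parabolic_word_key cs hz l₀.length l₀ le_rfl hl₀J
    rw [hl₀prod] at hA hm₀prod
    rw [inv_mul_cancel_left] at hA
    cases m₀ with
    | nil =>
      have h5 : (1 : W) = u₀⁻¹ := by simpa using hm₀prod
      have hu₀1 : u₀ = 1 := by rw [← inv_inv u₀, ← h5, inv_one]
      intro u hu
      have h6 := hmin u hu
      rwa [hu₀1, one_mul] at h6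
    | cons i m₀' =>
      exfalso
      have hiJ : i ∈ J₁ := hm₀J i List.mem_cons_self
      have hsm : cs.simple i * (v₂ * v₃) = cs.wordProd m₀' * (u₀ * (v₂ * v₃)) := by
        have h5 : v₂ * v₃ = u₀⁻¹ * (u₀ * (v₂ * v₃)) := (inv_mul_cancel_left _ _).symm
        conv_lhs => rw [h5]
        rw [← hm₀prod, cs.wordProd_cons,
          ← mul_assoc (cs.simple i) (cs.simple i * cs.wordProd m₀') _,
          cs.simple_mul_simple_cancel_left]
      obtain ⟨hB, -⟩ := parabolic_word_key cs hz m₀'.length m₀' le_rfl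
        (fun j hj => hm₀J j (List.mem_cons_of_mem _ hj))
      have hm₀'le : cs.length (cs.wordProd m₀') ≤ m₀'.length := cs.length_wordProd_le m₀'
      have hm₀len : m₀'.length + 1 = cs.length u₀⁻¹ := by
        have h7 : cs.length (cs.wordProd (i :: m₀')) = (i :: m₀').length := hm₀red
        rw [hm₀prod, List.length_cons] at h7
        omega
      have hdesc : cs.length (cs.simple i * (v₂ * v₃)) < cs.length (v₂ * v₃) := by
        rw [hsm, hB]
        omega
      obtain ⟨m₂, hm₂red, hm₂⟩ := cs.exists_reduced_word' v₂
      obtain ⟨m₃, hm₃red, hm₃⟩ := cs.exists_reduced_word' v₃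
      have hm₂len : m₂.length = cs.length v₂ := by
        have h8 : cs.length (cs.wordProd m₂) = m₂.length := hm₂red
        rw [← h8, ← hm₂]
      have hm₃len : m₃.length = cs.length v₃ := by
        have h8 : cs.length (cs.wordProd m₃) = m₃.length := hm₃red
        rw [← h8, ← hm₃]
      have happ : cs.wordProd (m₂ ++ m₃) = v₂ * v₃ := by
        rw [cs.wordProd_append, ← hm₂, ← hm₃]
      have hredapp : cs.IsReduced (m₂ ++ m₃) := by
        show cs.length (cs.wordProd (m₂ ++ m₃)) = (m₂ ++ m₃).length
        rw [happ, hlen23, List.length_append, hm₂len, hm₃len]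
      obtain ⟨j, hj, heq⟩ := strong_exchange cs (cs.isReflection_simple i) hredapp happ hdesc
      rw [List.length_append] at hj
      by_cases hcase : j < m₂.length
      · rw [List.eraseIdx_append_of_lt_length hcase, cs.wordProd_append, ← hm₃] at heq
        have hsv₂ : cs.simple i * v₂ = cs.wordProd (m₂.eraseIdx j) := by
          have h9 : (cs.simple i * v₂) * v₃ = cs.wordProd (m₂.eraseIdx j) * v₃ := by
            rw [mul_assoc]; exact heq
          exact mul_right_cancel h9
        have h6 : cs.length (cs.simple i * v₂) ≤ (m₂.eraseIdx j).length := by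
          rw [hsv₂]; exact cs.length_wordProd_le _
        have h7 := hv₂min (cs.simple i) (simple_mem_parabolic cs hiJ)
        rw [List.length_eraseIdx, if_pos hcase] at h6
        omega
      · push_neg at hcase
        rw [List.eraseIdx_append_of_length_le hcase, cs.wordProd_append, ← hm₂] at heq
        have htz : (v₂⁻¹ * cs.simple i * v₂) * v₃ = cs.wordProd (m₃.eraseIdx (j - m₂.length)) := by
          have h8 : (v₂⁻¹ * cs.simple i * v₂) * v₃ = v₂⁻¹ * (cs.simple i * (v₂ * v₃)) := by group
          rw [h8, heq, inv_mul_cancel_left]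
        have hv₂P₂ : v₂ ∈ parabolic cs J₂ := by
          have h9 : v₂ = v₁⁻¹ * (v₁ * v₂) := by group
          rw [h9]
          exact mul_mem (inv_mem (hP12 hv₁P)) hv₁₂P
        have htP : v₂⁻¹ * cs.simple i * v₂ ∈ parabolic cs J₂ :=
          mul_mem (mul_mem (inv_mem hv₂P₂) (simple_mem_parabolic cs (hJ hiJ))) hv₂P₂
        have h9 := hv₃min _ htP
        have h10 : cs.length ((v₂⁻¹ * cs.simple i * v₂) * v₃)
            ≤ (m₃.eraseIdx (j - m₂.length)).length := by
          rw [htz]; exact cs.length_wordProd_le _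
        have hjm : j - m₂.length < m₃.length := by omega
        rw [List.length_eraseIdx, if_pos hjm] at h10
        omega
  refine ⟨⟨hv₁P, hminrep, hlen1_23⟩, ?_, ?_⟩
  · obtain ⟨l, l', hlred, hlprod, hsub, hl'red, hl'prod⟩ := hble1
    obtain ⟨m₃, hm₃red, hm₃⟩ := cs.exists_reduced_word' v₃
    refine ⟨l ++ m₃, l', ?_, ?_, hsub.trans (List.sublist_append_left l m₃), hl'red, hl'prod⟩
    · show cs.length (cs.wordProd (l ++ m₃)) = (l ++ m₃).length
      have hllen : l.length = cs.length (v₁ * v₂) := by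
        have h8 : cs.length (cs.wordProd l) = l.length := hlred
        rw [← h8, hlprod]
      have hm₃len : m₃.length = cs.length v₃ := by
        have h8 : cs.length (cs.wordProd m₃) = m₃.length := hm₃red
        rw [← h8, ← hm₃]
      rw [cs.wordProd_append, hlprod, ← hm₃, List.length_append, hllen, hm₃len]
      exact hlen123
    · rw [cs.wordProd_append, hlprod, ← hm₃, mul_assoc]
  · intro x hx hxP
    rw [hassoc] at hx
    exact hmax1 x (hmax2 x hx (hP12 hxP)) hxP


end TriAvoid
end

section
/- Let (W,S) be any Coxeter system with S finite and let w = uv be a Grassmannian factorization. Then w is 2-palindromic if and only if u is 2-palindromic and |u·pred(v) ∩ pred(w)| = 1, where u·pred(v) = {uv' : v' ∈ pred(v)}. -/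
namespace TriAvoid

noncomputable section

namespace Mach

open CoxeterSystem List
open scoped Classical

variable {B W : Type*} [Group W] {M : CoxeterMatrix B} (cs : CoxeterSystem M W)

/-! ### Sign products -/

/-- Product of `-1` for each occurrence of `t` in `l`. -/
def sgn (l : List W) (t : W) : ℤˣ := (l.map fun x => if x = t then (-1 : ℤˣ) else 1).prod

variable {cs}

omit [Group W] in
lemma sgn_nil (t : W) : sgn ([] : List W) t = 1 := rfl

omit [Group W] in
lemma sgn_cons (a : W) (l : List W) (t : W) :
    sgn (a :: l) t = (if a = t then (-1 : ℤˣ) else 1) * sgn l t := by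
  simp [sgn]

omit [Group W] in
lemma sgn_eq_one_of_not_mem {l : List W} {t : W} (h : t ∉ l) : sgn l t = 1 := by
  induction l with
  | nil => rfl
  | cons a l ih =>
    have ha : a ≠ t := fun hc => h (hc ▸ mem_cons_self)
    rw [sgn_cons, if_neg ha, one_mul]
    exact ih (fun hc => h (mem_cons_of_mem a hc))

omit [Group W] in
lemma sgn_eq_neg_one_iff_mem {l : List W} (hl : l.Nodup) {t : W} : sgn l t = -1 ↔ t ∈ l := by
  induction l with
  | nil => simp [sgn_nil]
  | cons a l ih =>
    rw [nodup_cons] at hl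
    by_cases ha : a = t
    · subst ha
      rw [sgn_cons, if_pos rfl, sgn_eq_one_of_not_mem hl.1, mul_one]
      simp
    · rw [sgn_cons, if_neg ha, one_mul, ih hl.2, mem_cons]
      exact ⟨Or.inr, fun h => h.elim (fun h' => absurd h'.symm ha) id⟩

/-! ### The sign representation on `W × ℤˣ` -/

variable (cs)

/-- The function underlying Tits' reflection-sign action of the generator `i`. -/
def nu (i : B) : W × ℤˣ → W × ℤˣ :=
  fun p => (cs.simple i * p.1 * cs.simple i, if p.1 = cs.simple i then -p.2 else p.2)

lemma nu_invol (i : B) : Function.Involutive (nu cs i) := by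
  rintro ⟨t, ε⟩
  simp only [nu]
  by_cases h : t = cs.simple i
  · subst h
    simp [cs.simple_mul_simple_self, cs.simple_mul_simple_cancel_left]
  · have h2 : cs.simple i * t * cs.simple i ≠ cs.simple i := by
      intro hc
      apply h
      have := congrArg (fun x => cs.simple i * x * cs.simple i) hc
      simpa [mul_assoc, cs.simple_mul_simple_cancel_left, cs.simple_mul_simple_self] using this
    have h3 : cs.simple i * (cs.simple i * t * cs.simple i) * cs.simple i = t := by
      rw [mul_assoc, mul_assoc, cs.simple_mul_simple_self, mul_one, ← mul_assoc,
        cs.simple_mul_simple_self, one_mul]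
    simp [h, h2, h3]

/-- Tits' reflection-sign permutation for the generator `i`. -/
def nuE (i : B) : Equiv.Perm (W × ℤˣ) := Function.Involutive.toPerm _ (nu_invol cs i)

lemma nuE_apply (i : B) (p : W × ℤˣ) : nuE cs i p = nu cs i p := rfl

/-- Key computation: the action of a word on `W × ℤˣ`. -/
lemma prod_map_nuE (ω : List B) (t : W) (ε : ℤˣ) :
    ((ω.map (nuE cs)).prod) (t, ε) =
      (cs.wordProd ω * t * (cs.wordProd ω)⁻¹, ε * sgn (cs.rightInvSeq ω) t) := by
  induction ω generalizing t ε with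
  | nil => simp [sgn_nil]
  | cons i ω ih =>
    have hris : cs.rightInvSeq (i :: ω) =
        ((cs.wordProd ω)⁻¹ * cs.simple i * cs.wordProd ω) :: cs.rightInvSeq ω := rfl
    rw [map_cons, prod_cons, Equiv.Perm.mul_apply, ih, nuE_apply]
    simp only [nu, hris, sgn_cons, cs.wordProd_cons, mul_inv_rev, cs.inv_simple]
    rw [Prod.mk.injEq]
    refine ⟨?_, ?_⟩
    · group
    · by_cases hc : t = (cs.wordProd ω)⁻¹ * cs.simple i * cs.wordProd ω
      · have hc2 : cs.wordProd ω * t * (cs.wordProd ω)⁻¹ = cs.simple i := by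
          rw [hc]; group
        rw [if_pos hc2, if_pos hc.symm]
        apply Units.ext
        simp only [Units.val_mul, Units.val_neg, Units.val_one]
        ring
      · have hc2 : cs.wordProd ω * t * (cs.wordProd ω)⁻¹ ≠ cs.simple i := by
          intro h
          apply hc
          rw [← h]; group
        rw [if_neg hc2, if_neg (fun h => hc h.symm), one_mul]

lemma nuE_liftable : M.IsLiftable (nuE cs) := by
  intro i j
  set p := cs.simple i * cs.simple j with hp
  set P := p⁻¹ with hP
  have hPm : P ^ M.M i j = 1 := by
    rw [hP, inv_pow, cs.simple_mul_simple_pow i j, inv_one]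
  -- conjugation identities
  have hjpj : ∀ k : ℕ, cs.simple j * p ^ k * cs.simple j = P ^ k := by
    intro k
    have h1 : cs.simple j * p * (cs.simple j)⁻¹ = P := by
      rw [hp, hP, cs.inv_simple, mul_inv_rev, cs.inv_simple, cs.inv_simple]
      rw [← mul_assoc, mul_assoc (cs.simple j) (cs.simple i) (cs.simple j)]
      simp [mul_assoc, cs.simple_mul_simple_self]
    calc cs.simple j * p ^ k * cs.simple j
        = (cs.simple j * p * (cs.simple j)⁻¹) ^ k := by
          rw [conj_pow, cs.inv_simple]
      _ = P ^ k := by rw [h1]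
  have keyA : ∀ k : ℕ, (p ^ k)⁻¹ * cs.simple j * p ^ k = P ^ (2 * k) * cs.simple j := by
    intro k
    calc (p ^ k)⁻¹ * cs.simple j * p ^ k
        = (p ^ k)⁻¹ * (cs.simple j * p ^ k * cs.simple j) * cs.simple j := by
          simp [mul_assoc, cs.simple_mul_simple_self]
      _ = (p ^ k)⁻¹ * P ^ k * cs.simple j := by rw [hjpj k]
      _ = P ^ (2 * k) * cs.simple j := by
          rw [two_mul, pow_add, hP, inv_pow]
  have keyB : ∀ k : ℕ, (p ^ k)⁻¹ * (cs.simple j * cs.simple i * cs.simple j) * p ^ k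
      = P ^ (2 * k + 1) * cs.simple j := by
    intro k
    have hPsj : cs.simple j * cs.simple i * cs.simple j = P * cs.simple j := by
      rw [hP, hp, mul_inv_rev, cs.inv_simple, cs.inv_simple]
    calc (p ^ k)⁻¹ * (cs.simple j * cs.simple i * cs.simple j) * p ^ k
        = (p ^ k)⁻¹ * P * (cs.simple j * p ^ k * cs.simple j) * cs.simple j := by
          rw [hPsj]; simp [mul_assoc, cs.simple_mul_simple_self]
      _ = (p ^ k)⁻¹ * P * P ^ k * cs.simple j := by rw [hjpj k]
      _ = P ^ (2 * k + 1) * cs.simple j := by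
          rw [pow_add, two_mul, pow_add, pow_one, hP, inv_pow]
          group
  -- the iterate formula
  have iter : ∀ (k : ℕ) (t : W) (ε : ℤˣ), ((nuE cs i * nuE cs j) ^ k) (t, ε) =
      (p ^ k * t * (p ^ k)⁻¹,
        ε * ∏ r ∈ Finset.range (2 * k), (if P ^ r * cs.simple j = t then (-1 : ℤˣ) else 1)) := by
    intro k
    induction k with
    | zero => intro t ε; simp
    | succ k ihk =>
      intro t ε
      rw [pow_succ', Equiv.Perm.mul_apply, Equiv.Perm.mul_apply, ihk, nuE_apply, nuE_apply]
      simp only [nu]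
      rw [Prod.mk.injEq]
      have e1 : (p ^ k * t * (p ^ k)⁻¹ = cs.simple j) ↔ (P ^ (2 * k) * cs.simple j = t) := by
        rw [← keyA k]
        constructor
        · intro h; rw [← h]; group
        · intro h; rw [← h]; group
      have e2 : (cs.simple j * (p ^ k * t * (p ^ k)⁻¹) * cs.simple j = cs.simple i)
          ↔ (P ^ (2 * k + 1) * cs.simple j = t) := by
        rw [← keyB k]
        constructor
        · intro h
          have h4 : p ^ k * t * (p ^ k)⁻¹ = cs.simple j * cs.simple i * cs.simple j := by
            rw [← h]
            simp [mul_assoc, cs.simple_mul_simple_self]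
          rw [← h4]; group
        · intro h; rw [← h]
          simp [mul_assoc, cs.simple_mul_simple_self]
      have hsplit : 2 * (k + 1) = (2 * k) + 1 + 1 := by ring
      rw [hsplit, Finset.prod_range_succ, Finset.prod_range_succ]
      refine ⟨?_, ?_⟩
      · show cs.simple i * (cs.simple j * (p ^ k * t * (p ^ k)⁻¹) * cs.simple j) * cs.simple i
          = p ^ (k+1) * t * (p ^ (k+1))⁻¹
        have hsj : cs.simple j * cs.simple i = p⁻¹ := by
          rw [hp, mul_inv_rev, cs.inv_simple, cs.inv_simple]
        calc cs.simple i * (cs.simple j * (p ^ k * t * (p ^ k)⁻¹) * cs.simple j) * cs.simple i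
            = (cs.simple i * cs.simple j) * (p ^ k * t * (p ^ k)⁻¹)
              * (cs.simple j * cs.simple i) := by group
          _ = p * (p ^ k * t * (p ^ k)⁻¹) * p⁻¹ := by rw [← hp, hsj]
          _ = p ^ (k+1) * t * (p ^ (k+1))⁻¹ := by rw [pow_succ']; group
      · show (if cs.simple j * (p ^ k * t * (p ^ k)⁻¹) * cs.simple j = cs.simple i then
            -(if p ^ k * t * (p ^ k)⁻¹ = cs.simple j
              then -(ε * ∏ r ∈ Finset.range (2 * k), _) else ε * ∏ r ∈ Finset.range (2 * k), _)
            else (if p ^ k * t * (p ^ k)⁻¹ = cs.simple j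
              then -(ε * ∏ r ∈ Finset.range (2 * k), _)
              else ε * ∏ r ∈ Finset.range (2 * k), _)) = _
        by_cases c1 : p ^ k * t * (p ^ k)⁻¹ = cs.simple j <;>
          by_cases c2 : cs.simple j * (p ^ k * t * (p ^ k)⁻¹) * cs.simple j = cs.simple i
        · rw [if_pos c1, if_pos c2, if_pos (e1.mp c1), if_pos (e2.mp c2)]
          apply Units.ext; simp only [Units.val_mul, Units.val_neg, Units.val_one]; ring
        · rw [if_pos c1, if_neg c2, if_pos (e1.mp c1),
            if_neg (fun h => c2 (e2.mpr h))]
          apply Units.ext; simp only [Units.val_mul, Units.val_neg, Units.val_one]; ring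
        · rw [if_neg c1, if_pos c2, if_neg (fun h => c1 (e1.mpr h)), if_pos (e2.mp c2)]
          apply Units.ext; simp only [Units.val_mul, Units.val_neg, Units.val_one]; ring
        · rw [if_neg c1, if_neg c2, if_neg (fun h => c1 (e1.mpr h)),
            if_neg (fun h => c2 (e2.mpr h))]
          apply Units.ext; simp only [Units.val_mul, Units.val_neg, Units.val_one]; ring
  -- conclude
  have hpm : p ^ M.M i j = 1 := cs.simple_mul_simple_pow i j
  apply Equiv.ext
  rintro ⟨t, ε⟩
  have hprod : ∏ r ∈ Finset.range (2 * M.M i j),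
      (if P ^ r * cs.simple j = t then (-1:ℤˣ) else 1) = 1 := by
    rw [two_mul, Finset.prod_range_add]
    have hsh : ∀ r : ℕ, P ^ (M.M i j + r) = P ^ r := fun r => by rw [pow_add, hPm, one_mul]
    simp only [hsh]
    rw [← sq]
    exact Int.units_sq _
  rw [iter, hpm, hprod]
  simp

/-- The sign representation as a group homomorphism. -/
def rho : W →* Equiv.Perm (W × ℤˣ) := cs.lift ⟨nuE cs, nuE_liftable cs⟩

lemma rho_simple (i : B) : rho cs (cs.simple i) = nuE cs i :=
  cs.lift_apply_simple (nuE_liftable cs) i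

lemma rho_wordProd (ω : List B) : rho cs (cs.wordProd ω) = (ω.map (nuE cs)).prod := by
  induction ω with
  | nil => simp [cs.wordProd_nil]
  | cons i ω ih => rw [cs.wordProd_cons, map_mul, rho_simple, map_cons, prod_cons, ih]

/-- The sign `η(w, t)`. -/
def eta (w t : W) : ℤˣ := ((rho cs w) (t, 1)).2

lemma eta_eq_sgn {w : W} (ω : List B) (hω : cs.wordProd ω = w) (t : W) :
    eta cs w t = sgn (cs.rightInvSeq ω) t := by
  rw [eta, ← hω, rho_wordProd, prod_map_nuE, one_mul]

lemma rho_apply (w t : W) (ε : ℤˣ) : rho cs w (t, ε) = (w * t * w⁻¹, ε * eta cs w t) := by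
  obtain ⟨ω, _, rfl⟩ := cs.exists_reduced_word' w
  rw [rho_wordProd, prod_map_nuE, eta_eq_sgn cs ω rfl]

lemma eta_mul (a b t : W) : eta cs (a * b) t = eta cs b t * eta cs a (b * t * b⁻¹) := by
  have h : rho cs (a * b) (t, 1) = rho cs a (rho cs b (t, 1)) := by
    rw [map_mul, Equiv.Perm.mul_apply]
  rw [rho_apply, rho_apply, rho_apply] at h
  have := congrArg Prod.snd h
  simpa using this

lemma eta_one (t : W) : eta cs 1 t = 1 := by
  rw [eta, map_one]
  rfl

lemma eta_simple_self (i : B) : eta cs (cs.simple i) (cs.simple i) = -1 := by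
  rw [eta_eq_sgn cs [i] (cs.wordProd_singleton i)]
  have : cs.rightInvSeq [i] = [cs.simple i] := by simp [CoxeterSystem.rightInvSeq_singleton]
  rw [this, sgn_cons, if_pos rfl, sgn_nil, mul_one]

lemma eta_self_of_isReflection {t : W} (ht : cs.IsReflection t) : eta cs t t = -1 := by
  obtain ⟨v, k, rfl⟩ := ht
  set t := v * cs.simple k * v⁻¹ with hts
  -- eta(t, t) = eta (s_k v⁻¹) t * eta v (s_k)
  have h1 : eta cs t t = eta cs (cs.simple k * v⁻¹) t * eta cs v ((cs.simple k * v⁻¹) * t * (cs.simple k * v⁻¹)⁻¹) := by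
    have : t = v * (cs.simple k * v⁻¹) := by rw [hts]; group
    nth_rewrite 1 [this]
    rw [eta_mul]
  have hconj : (cs.simple k * v⁻¹) * t * (cs.simple k * v⁻¹)⁻¹ = cs.simple k := by
    rw [hts, mul_inv_rev, inv_inv, cs.inv_simple]
    calc cs.simple k * v⁻¹ * (v * cs.simple k * v⁻¹) * (v * cs.simple k)
        = cs.simple k * (v⁻¹ * v) * cs.simple k * (v⁻¹ * v) * cs.simple k := by group
      _ = cs.simple k := by simp [cs.simple_mul_simple_self, mul_assoc,
            cs.simple_mul_simple_cancel_left]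
  have h2 : eta cs (cs.simple k * v⁻¹) t = eta cs v⁻¹ t * eta cs (cs.simple k) (v⁻¹ * t * v) := by
    have := eta_mul cs (cs.simple k) v⁻¹ t
    rw [this, inv_inv]
  have hconj2 : v⁻¹ * t * v = cs.simple k := by
    rw [hts]
    group
  have h3 : eta cs v⁻¹ t * eta cs v (cs.simple k) = 1 := by
    have := eta_mul cs v⁻¹ v (cs.simple k)
    rw [inv_mul_cancel, eta_one] at this
    have hc : v * cs.simple k * v⁻¹ = t := hts.symm
    rw [hc] at this
    rw [mul_comm]
    exact this.symm
  rw [h1, hconj, h2, hconj2, eta_simple_self]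
  calc eta cs v⁻¹ t * -1 * eta cs v (cs.simple k)
      = eta cs v⁻¹ t * eta cs v (cs.simple k) * -1 := by
        apply Units.ext; simp only [Units.val_mul, Units.val_neg, Units.val_one]; ring
    _ = -1 := by rw [h3, one_mul]

/-- **Strong exchange property.** -/
theorem strong_exchange {ω : List B} (hω : cs.IsReduced ω) {t : W} (ht : cs.IsReflection t)
    (hlt : cs.length (cs.wordProd ω * t) < cs.length (cs.wordProd ω)) :
    t ∈ cs.rightInvSeq ω := by
  set w := cs.wordProd ω with hw
  have h1 : eta cs (w * t) t = 1 := by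
    obtain ⟨τ, hτred, hτ⟩ := cs.exists_reduced_word' (w * t)
    rw [eta_eq_sgn cs τ hτ.symm]
    have hnotmem : t ∉ cs.rightInvSeq τ := by
      intro hmem
      have hinv := cs.isRightInversion_of_mem_rightInvSeq hτred hmem
      rw [← hτ] at hinv
      have : cs.length (w * t * t) < cs.length (w * t) := hinv.2
      rw [mul_assoc, ht.mul_self, mul_one] at this
      omega
    exact sgn_eq_one_of_not_mem hnotmem
  have h2 : eta cs w t = -1 := by
    have hwt : w = (w * t) * t := by rw [mul_assoc, ht.mul_self, mul_one]
    have htt : t * t * t⁻¹ = t := by rw [ht.mul_self, one_mul]; exact ht.inv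
    calc eta cs w t = eta cs ((w * t) * t) t := by rw [← hwt]
      _ = eta cs t t * eta cs (w * t) (t * t * t⁻¹) := eta_mul cs (w * t) t t
      _ = -1 * eta cs (w * t) t := by rw [eta_self_of_isReflection cs ht, htt]
      _ = -1 := by rw [h1, mul_one]
  have h3 : sgn (cs.rightInvSeq ω) t = -1 := by
    rw [← eta_eq_sgn cs ω hw.symm, h2]
  exact (sgn_eq_neg_one_iff_mem (hω.nodup_rightInvSeq)).mp h3

/-- Strong exchange, `eraseIdx`-free sublist form (right version). -/
theorem exists_sublist_of_inversion {ω : List B} (hω : cs.IsReduced ω) {t : W}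
    (ht : cs.IsReflection t)
    (hlt : cs.length (cs.wordProd ω * t) < cs.length (cs.wordProd ω)) :
    ∃ σ, σ.Sublist ω ∧ σ.length + 1 = ω.length ∧ cs.wordProd σ = cs.wordProd ω * t := by
  have hmem := strong_exchange cs hω ht hlt
  obtain ⟨j, hj, hget⟩ := List.mem_iff_getElem.mp hmem
  rw [cs.length_rightInvSeq] at hj
  refine ⟨ω.eraseIdx j, List.eraseIdx_sublist ω j, List.length_eraseIdx_add_one hj, ?_⟩
  rw [← cs.wordProd_mul_getD_rightInvSeq ω j]
  congr 1
  rw [List.getD_eq_getElem _ _ (by rw [cs.length_rightInvSeq]; exact hj), hget]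

/-- Strong exchange, left version. -/
theorem exists_sublist_of_inversion_left {ω : List B} (hω : cs.IsReduced ω) {t : W}
    (ht : cs.IsReflection t)
    (hlt : cs.length (t * cs.wordProd ω) < cs.length (cs.wordProd ω)) :
    ∃ σ, σ.Sublist ω ∧ σ.length + 1 = ω.length ∧ cs.wordProd σ = t * cs.wordProd ω := by
  have hrev : cs.IsReduced ω.reverse := (cs.isReduced_reverse_iff ω).mpr hω
  have hinv : cs.length (cs.wordProd ω.reverse * t) < cs.length (cs.wordProd ω.reverse) := by
    rw [cs.wordProd_reverse]
    have e1 : cs.length ((cs.wordProd ω)⁻¹ * t) = cs.length (t * cs.wordProd ω) := by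
      have : ((cs.wordProd ω)⁻¹ * t)⁻¹ = t * cs.wordProd ω := by
        rw [mul_inv_rev, inv_inv, ht.inv]
      rw [← this, cs.length_inv]
    rw [e1, cs.length_inv]
    exact hlt
  obtain ⟨σ', hsub', hlen', hprod'⟩ := exists_sublist_of_inversion cs hrev ht hinv
  refine ⟨σ'.reverse, ?_, ?_, ?_⟩
  · have := hsub'.reverse
    rwa [List.reverse_reverse] at this
  · simpa using hlen'
  · have : cs.wordProd σ'.reverse = (cs.wordProd σ')⁻¹ := cs.wordProd_reverse σ'
    rw [this, hprod', cs.wordProd_reverse, mul_inv_rev, inv_inv, ht.inv]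

/-! ### Deletion property -/

theorem exists_reduced_sublist (ω : List B) :
    ∃ σ, σ.Sublist ω ∧ cs.IsReduced σ ∧ cs.wordProd σ = cs.wordProd ω := by
  suffices H : ∀ n (ω : List B), ω.length ≤ n →
      ∃ σ, σ.Sublist ω ∧ cs.IsReduced σ ∧ cs.wordProd σ = cs.wordProd ω from
    H ω.length ω le_rfl
  intro n
  induction n with
  | zero =>
    intro ω hω
    have : ω = [] := List.eq_nil_of_length_eq_zero (Nat.le_zero.mp hω)
    subst this
    exact ⟨[], List.Sublist.refl [], by simp [CoxeterSystem.IsReduced], rfl⟩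
  | succ n ih =>
    intro ω hlen
    by_cases hred : cs.IsReduced ω
    · exact ⟨ω, List.Sublist.refl ω, hred, rfl⟩
    rcases List.eq_nil_or_concat ω with rfl | ⟨ω₀, c, rfl⟩
    · exact absurd (by simp [CoxeterSystem.IsReduced]) hred
    rw [List.concat_eq_append] at *
    have hlen₀ : ω₀.length + 1 ≤ n + 1 := by simpa using hlen
    by_cases hred0 : cs.IsReduced ω₀
    · -- exchange case
      have hlt : cs.length (cs.wordProd ω₀ * cs.simple c) < cs.length (cs.wordProd ω₀) := by
        rcases cs.length_mul_simple (cs.wordProd ω₀) c with h | h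
        · exfalso
          apply hred
          show cs.length (cs.wordProd (ω₀ ++ [c])) = (ω₀ ++ [c]).length
          rw [cs.wordProd_append, cs.wordProd_singleton, h, hred0]
          simp
        · omega
      obtain ⟨σ₁, hsub₁, hlen₁, hprod₁⟩ :=
        exists_sublist_of_inversion cs hred0 (cs.isReflection_simple c) hlt
      obtain ⟨σ, hsub, hredσ, hprod⟩ := ih σ₁ (by omega)
      refine ⟨σ, hsub.trans (hsub₁.trans (List.sublist_append_left ω₀ [c])), hredσ, ?_⟩
      rw [hprod, hprod₁, cs.wordProd_append, cs.wordProd_singleton]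
    · obtain ⟨σ₀, hsub₀, hred₀, hprod₀⟩ := ih ω₀ (by omega)
      have hlt0 : σ₀.length < ω₀.length := by
        rcases Nat.lt_or_ge σ₀.length ω₀.length with h | h
        · exact h
        · exfalso
          have : σ₀ = ω₀ := hsub₀.eq_of_length (le_antisymm hsub₀.length_le h)
          exact hred0 (this ▸ hred₀)
      obtain ⟨σ, hsub, hredσ, hprod⟩ := ih (σ₀ ++ [c]) (by simp; omega)
      refine ⟨σ, hsub.trans (hsub₀.append (List.Sublist.refl [c])), hredσ, ?_⟩
      rw [hprod, cs.wordProd_append, cs.wordProd_append, hprod₀]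

/-! ### Basic facts about `bruhatLE` -/

lemma bruhatLE_refl (w : W) : bruhatLE cs w w := by
  obtain ⟨ω, hred, hπ⟩ := cs.exists_reduced_word' w
  exact ⟨ω, ω, hred, hπ.symm, List.Sublist.refl ω, hred, hπ.symm⟩

lemma one_bruhatLE (w : W) : bruhatLE cs 1 w := by
  obtain ⟨ω, hred, hπ⟩ := cs.exists_reduced_word' w
  exact ⟨ω, [], hred, hπ.symm, List.nil_sublist ω, by simp [CoxeterSystem.IsReduced], by simp⟩

lemma le_length_le {x w : W} (h : bruhatLE cs x w) : cs.length x ≤ cs.length w := by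
  obtain ⟨l, l', hl, hw, hsub, hl', hx⟩ := h
  have h1 : cs.length x = l'.length := by rw [← hx]; exact hl'
  have h2 : cs.length w = l.length := by rw [← hw]; exact hl
  rw [h1, h2]
  exact hsub.length_le

lemma le_eq_of_length_ge {x w : W} (h : bruhatLE cs x w)
    (hlen : cs.length w ≤ cs.length x) : x = w := by
  obtain ⟨l, l', hl, hw, hsub, hl', hx⟩ := h
  have h1 : cs.length x = l'.length := by rw [← hx]; exact hl'
  have h2 : cs.length w = l.length := by rw [← hw]; exact hl
  have : l' = l := hsub.eq_of_length (le_antisymm hsub.length_le (by omega))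
  rw [← hx, ← hw, this]

lemma le_of_sublist {ω σ : List B} (hred : cs.IsReduced ω) (hsub : σ.Sublist ω) :
    bruhatLE cs (cs.wordProd σ) (cs.wordProd ω) := by
  obtain ⟨σ', hsub', hred', hprod'⟩ := exists_reduced_sublist cs σ
  exact ⟨ω, σ', hred, rfl, hsub'.trans hsub, hred', hprod'⟩

/-! ### The chain order `leT` -/

/-- Bruhat order via reflection chains. -/
def leT (x w : W) : Prop :=
  Relation.ReflTransGen
    (fun a b => cs.length a < cs.length b ∧ ∃ t, cs.IsReflection t ∧ a = b * t) x w

lemma leT_refl (w : W) : leT cs w w := Relation.ReflTransGen.refl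

lemma leT_trans {x y w : W} (h1 : leT cs x y) (h2 : leT cs y w) : leT cs x w :=
  Relation.ReflTransGen.trans h1 h2

lemma leT.length_le {x w : W} (h : leT cs x w) : cs.length x ≤ cs.length w := by
  induction h with
  | refl => exact le_rfl
  | tail hab hbc ih => exact le_trans ih (le_of_lt hbc.1)

lemma leT_smul_of_gt {d : B} {w : W} (h : cs.length w < cs.length (cs.simple d * w)) :
    leT cs w (cs.simple d * w) := by
  apply Relation.ReflTransGen.single
  refine ⟨h, w⁻¹ * cs.simple d * w, ?_, ?_⟩
  · have := (cs.isReflection_simple d).conj w⁻¹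
    rwa [inv_inv] at this
  · calc w = (cs.simple d * cs.simple d) * w := by rw [cs.simple_mul_simple_self, one_mul]
      _ = cs.simple d * w * (w⁻¹ * cs.simple d * w) := by group

lemma leT_smul_of_lt {d : B} {w : W} (h : cs.length (cs.simple d * w) < cs.length w) :
    leT cs (cs.simple d * w) w := by
  apply Relation.ReflTransGen.single
  refine ⟨h, w⁻¹ * cs.simple d * w, ?_, ?_⟩
  · have := (cs.isReflection_simple d).conj w⁻¹
    rwa [inv_inv] at this
  · group

/-- `leT` has the subword property with respect to every reduced word. -/
theorem leT_exists_sublist {x w : W} (h : leT cs x w) :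
    ∀ ω, cs.IsReduced ω → cs.wordProd ω = w →
      ∃ σ, σ.Sublist ω ∧ cs.IsReduced σ ∧ cs.wordProd σ = x := by
  induction h with
  | refl => exact fun ω hred hπ => ⟨ω, List.Sublist.refl ω, hred, hπ⟩
  | @tail b c hab hbc ih =>
    intro ω hred hπ
    obtain ⟨hlt, t, ht, hbt⟩ := hbc
    have hinv : cs.length (cs.wordProd ω * t) < cs.length (cs.wordProd ω) := by
      rw [hπ, ← hbt]
      exact hlt
    obtain ⟨σ₁, hsub₁, _, hprod₁⟩ := exists_sublist_of_inversion cs hred ht hinv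
    obtain ⟨σ₂, hsub₂, hred₂, hprod₂⟩ := exists_reduced_sublist cs σ₁
    obtain ⟨σ, hsub, hredσ, hprodσ⟩ := ih σ₂ hred₂ (by rw [hprod₂, hprod₁, hπ, ← hbt])
    exact ⟨σ, hsub.trans (hsub₂.trans hsub₁), hredσ, hprodσ⟩

/-- The master induction: subword implies chain, with the two lifting lemmas. -/
theorem leT_master (n : ℕ) :
    (∀ w : W, cs.length w ≤ n → ∀ ω σ : List B, cs.IsReduced ω → cs.wordProd ω = w →
        σ.Sublist ω → leT cs (cs.wordProd σ) w) ∧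
    (∀ z : W, cs.length z ≤ n → ∀ (y : W) (d : B), leT cs y z →
        cs.length y < cs.length (cs.simple d * y) →
        cs.length z < cs.length (cs.simple d * z) →
        leT cs (cs.simple d * y) (cs.simple d * z)) ∧
    (∀ z : W, cs.length z ≤ n → ∀ (y : W) (d : B), leT cs y z →
        cs.length y < cs.length (cs.simple d * y) →
        cs.length (cs.simple d * z) < cs.length z →
        leT cs (cs.simple d * y) z) := by
  induction n with
  | zero =>
    refine ⟨?_, ?_, ?_⟩
    · intro w hw ω σ hred hπ hsub
      have hω : ω.length = 0 := by
        have : cs.length w = ω.length := by rw [← hπ]; exact hred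
        omega
      have : ω = [] := List.eq_nil_of_length_eq_zero hω
      subst this
      have : σ = [] := List.sublist_nil.mp hsub
      subst this
      rw [hπ]
      exact leT_refl cs w
    · intro z hz y d hyz hy hzup
      have hz1 : z = 1 := cs.length_eq_zero_iff.mp (by omega)
      have hy1 : y = 1 := cs.length_eq_zero_iff.mp (by
        have := hyz.length_le
        omega)
      subst hz1; subst hy1
      exact leT_refl cs _
    · intro z hz y d hyz hy hzdn
      omega
  | succ n ih =>
    obtain ⟨An, Bn, Cn⟩ := ih
    have A' : ∀ w : W, cs.length w ≤ n + 1 → ∀ ω σ : List B, cs.IsReduced ω →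
        cs.wordProd ω = w → σ.Sublist ω → leT cs (cs.wordProd σ) w := by
      intro w hw ω σ hred hπ hsub
      cases ω with
      | nil =>
        have : σ = [] := List.sublist_nil.mp hsub
        subst this
        rw [hπ]
        exact leT_refl cs w
      | cons d ω₀ =>
        have hred₀ : cs.IsReduced ω₀ := by
          have := hred.drop 1
          simpa using this
        have hω₀len : cs.length (cs.wordProd ω₀) = ω₀.length := hred₀
        have hwlen : cs.length w = ω₀.length + 1 := by
          rw [← hπ]
          have : cs.length (cs.wordProd (d :: ω₀)) = (d :: ω₀).length := hred
          simpa using this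
        have hsw : cs.simple d * w = cs.wordProd ω₀ := by
          rw [← hπ, cs.wordProd_cons, cs.simple_mul_simple_cancel_left]
        have hsw' : cs.simple d * cs.wordProd ω₀ = w := by
          rw [← hsw, cs.simple_mul_simple_cancel_left]
        have hw₀w : leT cs (cs.wordProd ω₀) w := by
          rw [← hsw]
          exact leT_smul_of_lt cs (by rw [hsw]; omega)
        rcases List.sublist_cons_iff.mp hsub with h | ⟨σ₀, rfl, hsub₀⟩
        · exact (An (cs.wordProd ω₀) (by omega) ω₀ σ hred₀ rfl h).trans hw₀w
        · have h1 : leT cs (cs.wordProd σ₀) (cs.wordProd ω₀) :=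
            An (cs.wordProd ω₀) (by omega) ω₀ σ₀ hred₀ rfl hsub₀
          have hπσ : cs.wordProd (d :: σ₀) = cs.simple d * cs.wordProd σ₀ :=
            cs.wordProd_cons d σ₀
          rcases Nat.lt_or_ge (cs.length (cs.wordProd σ₀))
              (cs.length (cs.simple d * cs.wordProd σ₀)) with hc | hc
          · have hB := Bn (cs.wordProd ω₀) (by omega) (cs.wordProd σ₀) d h1 hc
              (by rw [hsw']; omega)
            rw [hπσ, ← hsw']
            exact hB
          · have hlt : cs.length (cs.simple d * cs.wordProd σ₀) <
                cs.length (cs.wordProd σ₀) :=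
              lt_of_le_of_ne hc (cs.length_simple_mul_ne (cs.wordProd σ₀) d)
            rw [hπσ]
            exact (leT_smul_of_lt cs hlt).trans (h1.trans hw₀w)
    have C' : ∀ z : W, cs.length z ≤ n + 1 → ∀ (y : W) (d : B), leT cs y z →
        cs.length y < cs.length (cs.simple d * y) →
        cs.length (cs.simple d * z) < cs.length z →
        leT cs (cs.simple d * y) z := by
      intro z hz y d hyz hyup hzdn
      obtain ⟨ρ, hρred, hρ⟩ := cs.exists_reduced_word' (cs.simple d * z)
      have hπdρ : cs.wordProd (d :: ρ) = z := by
        rw [cs.wordProd_cons, ← hρ, cs.simple_mul_simple_cancel_left]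
      have hreddρ : cs.IsReduced (d :: ρ) := by
        show cs.length (cs.wordProd (d :: ρ)) = (d :: ρ).length
        rw [hπdρ]
        have h1 : cs.length (cs.simple d * z) = ρ.length := by rw [hρ]; exact hρred
        have h2 : cs.length (cs.simple d * z) + 1 = cs.length z ∨
            cs.length z + 1 = cs.length (cs.simple d * z) := by
          rcases cs.length_simple_mul z d with h | h
          · right; omega
          · left; omega
        simp only [List.length_cons]
        omega
      obtain ⟨σ', hsub', hred', hprod'⟩ := leT_exists_sublist cs hyz (d :: ρ) hreddρ hπdρ
      rcases List.sublist_cons_iff.mp hsub' with h | ⟨σ'', rfl, hsub''⟩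
      · -- σ' <+ ρ ; then (d :: σ') is a sublist of (d :: ρ)
        have hconssub : (d :: σ').Sublist (d :: ρ) := List.cons_sublist_cons.mpr h
        have := A' z hz (d :: ρ) (d :: σ') hreddρ hπdρ hconssub
        rwa [cs.wordProd_cons, hprod'] at this
      · exfalso
        have hlen'' : cs.length (cs.wordProd (d :: σ'')) = σ''.length + 1 := by
          have : cs.length (cs.wordProd (d :: σ'')) = (d :: σ'').length := hred'
          simpa using this
        have hy2 : cs.length y = σ''.length + 1 := by rw [← hprod']; exact hlen''
        have hsy : cs.simple d * y = cs.wordProd σ'' := by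
          rw [← hprod', cs.wordProd_cons, cs.simple_mul_simple_cancel_left]
        have : cs.length (cs.simple d * y) ≤ σ''.length := by
          rw [hsy]
          exact cs.length_wordProd_le σ''
        omega
    have B' : ∀ z : W, cs.length z ≤ n + 1 → ∀ (y : W) (d : B), leT cs y z →
        cs.length y < cs.length (cs.simple d * y) →
        cs.length z < cs.length (cs.simple d * z) →
        leT cs (cs.simple d * y) (cs.simple d * z) := by
      intro z hz y d hyz hyup hzup
      rcases Relation.ReflTransGen.cases_tail hyz with heq | ⟨z', hyz', hstep⟩
      · subst heq
        exact leT_refl cs _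
      · obtain ⟨hlt', t, ht, rfl⟩ := hstep
        -- y ≤T z * t with ℓ(z*t) < ℓ z
        rcases Nat.lt_or_ge (cs.length (z * t)) (cs.length (cs.simple d * (z * t)))
            with hcase | hcase
        · have h1 : leT cs (cs.simple d * y) (cs.simple d * (z * t)) :=
            Bn (z * t) (by omega) y d hyz' hyup hcase
          refine h1.trans (Relation.ReflTransGen.single ⟨?_, t, ht, ?_⟩)
          · have hub : cs.length (cs.simple d * (z * t)) ≤ cs.length (z * t) + 1 := by
              rcases cs.length_simple_mul (z * t) d with h | h <;> omega
            omega
          · rw [mul_assoc]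
        · have hcase' : cs.length (cs.simple d * (z * t)) < cs.length (z * t) :=
            lt_of_le_of_ne hcase (cs.length_simple_mul_ne (z * t) d)
          have h1 : leT cs (cs.simple d * y) (z * t) :=
            Cn (z * t) (by omega) y d hyz' hyup hcase'
          have h2 : leT cs (z * t) z :=
            Relation.ReflTransGen.single ⟨hlt', t, ht, rfl⟩
          exact (h1.trans h2).trans (leT_smul_of_gt cs hzup)
    exact ⟨A', B', C'⟩

theorem bruhatLE_iff_leT {x w : W} : bruhatLE cs x w ↔ leT cs x w := by
  constructor
  · rintro ⟨l, l', hl, hw, hsub, hl', hx⟩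
    have := (leT_master cs (cs.length w)).1 w le_rfl l l' hl hw hsub
    rwa [hx] at this
  · intro h
    obtain ⟨ω, hred, hπ⟩ := cs.exists_reduced_word' w
    obtain ⟨σ, hsub, hredσ, hprodσ⟩ := leT_exists_sublist cs h ω hred hπ.symm
    exact ⟨ω, σ, hred, hπ.symm, hsub, hredσ, hprodσ⟩

theorem bruhatLE_trans {x y w : W} (h1 : bruhatLE cs x y) (h2 : bruhatLE cs y w) :
    bruhatLE cs x w := by
  rw [bruhatLE_iff_leT] at *
  exact h1.trans h2

/-- The full subword property: `x ≤ w` gives a reduced sublist of *every* reduced word. -/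
theorem subword_of_le {x w : W} (h : bruhatLE cs x w) {ω : List B} (hred : cs.IsReduced ω)
    (hπ : cs.wordProd ω = w) :
    ∃ σ, σ.Sublist ω ∧ cs.IsReduced σ ∧ cs.wordProd σ = x :=
  leT_exists_sublist cs ((bruhatLE_iff_leT cs).mp h) ω hred hπ

/-! ### Parabolic subgroups, support -/

lemma wordProd_mem_parabolic {J : Set B} {σ : List B} (hJ : ∀ k ∈ σ, k ∈ J) :
    cs.wordProd σ ∈ parabolic cs J := by
  show (σ.map cs.simple).prod ∈ _
  apply Subgroup.list_prod_mem
  intro x hx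
  rw [List.mem_map] at hx
  obtain ⟨k, hk, rfl⟩ := hx
  exact Subgroup.subset_closure ⟨k, hJ k hk, rfl⟩

lemma exists_word_of_mem_parabolic {J : Set B} {g : W} (hg : g ∈ parabolic cs J) :
    ∃ σ : List B, cs.IsReduced σ ∧ cs.wordProd σ = g ∧ ∀ k ∈ σ, k ∈ J := by
  have H : ∃ σ : List B, cs.wordProd σ = g ∧ ∀ k ∈ σ, k ∈ J := by
    induction hg using Subgroup.closure_induction with
    | mem x hx =>
      obtain ⟨i, hi, rfl⟩ := hx
      exact ⟨[i], by simp, by simpa using hi⟩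
    | one => exact ⟨[], by simp, by simp⟩
    | mul x y hx hy ihx ihy =>
      obtain ⟨σ₁, h1, hJ1⟩ := ihx
      obtain ⟨σ₂, h2, hJ2⟩ := ihy
      refine ⟨σ₁ ++ σ₂, by rw [cs.wordProd_append, h1, h2], ?_⟩
      intro k hk
      rcases List.mem_append.mp hk with h | h
      exacts [hJ1 k h, hJ2 k h]
    | inv x hx ihx =>
      obtain ⟨σ₁, h1, hJ1⟩ := ihx
      exact ⟨σ₁.reverse, by rw [cs.wordProd_reverse, h1],
        fun k hk => hJ1 k (List.mem_reverse.mp hk)⟩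
  obtain ⟨σ, hσ, hJσ⟩ := H
  obtain ⟨σ', hsub, hred, hprod⟩ := exists_reduced_sublist cs σ
  exact ⟨σ', hred, hprod.trans hσ, fun k hk => hJσ k (hsub.subset hk)⟩

lemma simple_le_of_mem_word {ω : List B} (hred : cs.IsReduced ω) {k : B} (hk : k ∈ ω) :
    bruhatLE cs (cs.simple k) (cs.wordProd ω) := by
  have := le_of_sublist cs hred (List.singleton_sublist.mpr hk)
  rwa [cs.wordProd_singleton] at this

lemma letters_mem_supp {w : W} {ω : List B} (hred : cs.IsReduced ω)
    (hπ : cs.wordProd ω = w) {k : B} (hk : k ∈ ω) : k ∈ supp cs w := by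
  have := simple_le_of_mem_word cs hred hk
  rw [hπ] at this
  exact this

lemma mem_parabolic_supp_of_le {u' u : W} (h : bruhatLE cs u' u) :
    u' ∈ parabolic cs (supp cs u) := by
  obtain ⟨ωu, hured, hπu⟩ := cs.exists_reduced_word' u
  obtain ⟨σ, hsub, hredσ, hπσ⟩ := subword_of_le cs h hured hπu.symm
  rw [← hπσ]
  exact wordProd_mem_parabolic cs
    (fun k hk => letters_mem_supp cs hured hπu.symm (hsub.subset hk))

lemma self_mem_parabolic_supp (u : W) : u ∈ parabolic cs (supp cs u) :=
  mem_parabolic_supp_of_le cs (bruhatLE_refl cs u)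

lemma supp_subset_of_le {x w : W} (h : bruhatLE cs x w) : supp cs x ⊆ supp cs w :=
  fun _ hi => bruhatLE_trans cs hi h

lemma supp_subset_supp_of_mem_parabolic {u g : W} (hg : g ∈ parabolic cs (supp cs u)) :
    supp cs g ⊆ supp cs u := by
  intro i hi
  obtain ⟨σ, hred, hπ, hJ⟩ := exists_word_of_mem_parabolic cs hg
  obtain ⟨σ', hsub, hred', hπ'⟩ := subword_of_le cs hi hred hπ
  have hσ'1 : σ'.length = 1 := by
    have h1 : cs.length (cs.wordProd σ') = σ'.length := hred'
    rw [hπ', cs.length_simple] at h1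
    omega
  obtain ⟨k, rfl⟩ := List.length_eq_one_iff.mp hσ'1
  have hkJ : k ∈ supp cs u := hJ k (hsub.subset (List.mem_singleton_self k))
  have heq : cs.simple i = cs.simple k := by
    rw [← hπ', cs.wordProd_singleton]
  show bruhatLE cs (cs.simple i) u
  rw [heq]
  exact hkJ

/-! ### Deodhar's length additivity -/

lemma length_wordProd_mul_of_minRep {J : Set B} {v : W} (hv : IsMinRep cs J v) :
    ∀ σ : List B, cs.IsReduced σ → (∀ k ∈ σ, k ∈ J) →
      cs.length (cs.wordProd σ * v) = σ.length + cs.length v := by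
  intro σ
  induction σ with
  | nil => intro _ _; simp
  | cons d σ₀ ih =>
    intro hred hJ
    have hred₀ : cs.IsReduced σ₀ := by simpa using hred.drop 1
    have h₀ : cs.length (cs.wordProd σ₀ * v) = σ₀.length + cs.length v :=
      ih hred₀ (fun k hk => hJ k (List.mem_cons_of_mem d hk))
    rw [cs.wordProd_cons, mul_assoc]
    rcases cs.length_simple_mul (cs.wordProd σ₀ * v) d with h | h
    · rw [h, h₀]
      simp only [List.length_cons]
      omega
    · exfalso
      obtain ⟨ωv, hωvred, hωv⟩ := cs.exists_reduced_word' v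
      have hlv : cs.length v = ωv.length := by rw [hωv]; exact hωvred
      have hπτ : cs.wordProd (σ₀ ++ ωv) = cs.wordProd σ₀ * v := by
        rw [cs.wordProd_append, ← hωv]
      have hτred : cs.IsReduced (σ₀ ++ ωv) := by
        show cs.length (cs.wordProd (σ₀ ++ ωv)) = (σ₀ ++ ωv).length
        rw [hπτ, h₀]
        simp only [List.length_append]
        omega
      have hlt : cs.length (cs.simple d * cs.wordProd (σ₀ ++ ωv)) <
          cs.length (cs.wordProd (σ₀ ++ ωv)) := by
        rw [hπτ]
        omega
      obtain ⟨κ, hκsub, hκlen, hκprod⟩ :=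
        exists_sublist_of_inversion_left cs hτred (cs.isReflection_simple d) hlt
      rw [hπτ] at hκprod
      rcases List.sublist_append_iff.mp hκsub with ⟨α, β, rfl, hα, hβ⟩
      have hαβlen : α.length + β.length + 1 = σ₀.length + ωv.length := by
        simpa using hκlen
      rcases Nat.lt_or_ge β.length ωv.length with hβlt | hβge
      · -- α = σ₀, deletion in the v-part
        have hαeq : α = σ₀ := hα.eq_of_length (le_antisymm hα.length_le (by omega))
        subst hαeq
        have hπβ : cs.wordProd β =
            ((cs.wordProd α)⁻¹ * cs.simple d * cs.wordProd α) * v := by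
          have h5 := hκprod
          rw [cs.wordProd_append] at h5
          have h6 := congrArg (fun z => (cs.wordProd α)⁻¹ * z) h5
          rw [← mul_assoc, inv_mul_cancel, one_mul] at h6
          rw [h6]
          group
        have hmem : ((cs.wordProd α)⁻¹ * cs.simple d * cs.wordProd α) ∈ parabolic cs J := by
          have h7 : cs.wordProd α ∈ parabolic cs J :=
            wordProd_mem_parabolic cs (fun k hk => hJ k (List.mem_cons_of_mem d hk))
          have h8 : cs.simple d ∈ parabolic cs J :=
            Subgroup.subset_closure ⟨d, hJ d (List.mem_cons_self), rfl⟩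
          exact mul_mem (mul_mem (inv_mem h7) h8) h7
        have h9 := hv _ hmem
        have h10 : cs.length (((cs.wordProd α)⁻¹ * cs.simple d * cs.wordProd α) * v)
            ≤ β.length := by
          rw [← hπβ]
          exact cs.length_wordProd_le β
        omega
      · -- β = ωv, deletion in the σ₀-part
        have hβeq : β = ωv := hβ.eq_of_length (le_antisymm hβ.length_le hβge)
        subst hβeq
        have hπα : cs.wordProd α = cs.simple d * cs.wordProd σ₀ := by
          have h5 := hκprod
          rw [cs.wordProd_append, ← hωv] at h5
          have h6 := congrArg (fun z => z * v⁻¹) h5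
          simpa [mul_assoc] using h6
        have h1 : cs.length (cs.simple d * cs.wordProd σ₀) ≤ α.length := by
          rw [← hπα]
          exact cs.length_wordProd_le α
        have h2 : cs.length (cs.simple d * cs.wordProd σ₀) = σ₀.length + 1 := by
          have h3 : cs.length (cs.wordProd (d :: σ₀)) = (d :: σ₀).length := hred
          rw [cs.wordProd_cons] at h3
          simpa using h3
        omega

lemma length_mul_of_mem_parabolic {J : Set B} {g v : W} (hg : g ∈ parabolic cs J)
    (hv : IsMinRep cs J v) : cs.length (g * v) = cs.length g + cs.length v := by
  obtain ⟨σ, hred, hπ, hJ⟩ := exists_word_of_mem_parabolic cs hg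
  have h1 := length_wordProd_mul_of_minRep cs hv σ hred hJ
  have h3 : cs.length (cs.wordProd σ) = σ.length := hred
  rw [← hπ, h1, h3]

/-! ### Finiteness -/

lemma finite_le [Finite B] (w : W) : {x : W | bruhatLE cs x w}.Finite := by
  have hsub : {x : W | bruhatLE cs x w} ⊆
      ⋃ k : Fin (cs.length w + 1),
        (fun f : Fin (k : ℕ) → B => cs.wordProd (List.ofFn f)) '' Set.univ := by
    intro x hx
    obtain ⟨l, l', hl, hwp, hsubl, hl', hx'⟩ := hx
    have hlen : l'.length < cs.length w + 1 := by
      have h1 : cs.length w = l.length := by rw [← hwp]; exact hl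
      have := hsubl.length_le
      omega
    refine Set.mem_iUnion.mpr ⟨⟨l'.length, hlen⟩, ?_⟩
    refine ⟨l'.get, Set.mem_univ _, ?_⟩
    show cs.wordProd (List.ofFn l'.get) = x
    rw [List.ofFn_get]
    exact hx'
  exact Set.Finite.subset (Set.finite_iUnion (fun k => Set.finite_univ.image _)) hsub

/-- The set of atoms below `w`. -/
def S1 (w : W) : Set W := {x : W | bruhatLE cs x w ∧ cs.length x = 1}

lemma S1_finite [Finite B] (w : W) : (S1 cs w).Finite :=
  (finite_le cs w).subset (fun _ hx => hx.1)

lemma pred_finite [Finite B] (w : W) : (pred cs w).Finite :=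
  (finite_le cs w).subset (fun _ hx => hx.1)

lemma S1_eq_image (w : W) : S1 cs w = cs.simple '' supp cs w := by
  ext x
  constructor
  · rintro ⟨hle, hlen⟩
    obtain ⟨i, rfl⟩ := (cs.length_eq_one_iff).mp hlen
    exact ⟨i, hle, rfl⟩
  · rintro ⟨i, hi, rfl⟩
    exact ⟨hi, cs.length_simple i⟩

/-! ### Coefficients -/

lemma coeff_zero (w : W) : coeff cs w 0 = 1 := by
  have hset : {x : W | bruhatLE cs x w ∧ cs.length x = 0} = {1} := by
    ext x
    simp only [Set.mem_setOf_eq, Set.mem_singleton_iff]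
    constructor
    · rintro ⟨_, hl⟩
      exact cs.length_eq_zero_iff.mp hl
    · rintro rfl
      exact ⟨one_bruhatLE cs w, cs.length_one⟩
  rw [coeff, hset, Set.ncard_singleton]

lemma coeff_top (w : W) : coeff cs w (cs.length w) = 1 := by
  have hset : {x : W | bruhatLE cs x w ∧ cs.length x = cs.length w} = {w} := by
    ext x
    simp only [Set.mem_setOf_eq, Set.mem_singleton_iff]
    constructor
    · rintro ⟨hle, hl⟩
      exact le_eq_of_length_ge cs hle (le_of_eq hl.symm)
    · rintro rfl
      exact ⟨bruhatLE_refl cs x, rfl⟩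
  rw [coeff, hset, Set.ncard_singleton]

lemma coeff_one_eq (w : W) : coeff cs w 1 = (S1 cs w).ncard := rfl

lemma coeff_pred_eq (w : W) (h : 1 ≤ cs.length w) :
    coeff cs w (cs.length w - 1) = (pred cs w).ncard := by
  have hset : {x : W | bruhatLE cs x w ∧ cs.length x = cs.length w - 1} = pred cs w := by
    ext x
    simp only [Set.mem_setOf_eq, pred, Set.mem_setOf_eq]
    constructor
    · rintro ⟨hle, hl⟩
      exact ⟨hle, by omega⟩
    · rintro ⟨hle, hl⟩
      exact ⟨hle, by omega⟩
  rw [coeff, hset]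

lemma kpal_two_iff [Finite B] (w : W) :
    KPalindromic cs 2 w ↔ (S1 cs w).ncard = (pred cs w).ncard := by
  constructor
  · intro h
    rcases Nat.eq_zero_or_pos (cs.length w) with h0 | h1
    · have hS : S1 cs w = ∅ := by
        apply Set.eq_empty_iff_forall_notMem.mpr
        rintro x ⟨hle, hlen⟩
        have := le_length_le cs hle
        omega
      have hP : pred cs w = ∅ := by
        apply Set.eq_empty_iff_forall_notMem.mpr
        rintro x ⟨hle, hlen⟩
        omega
      rw [hS, hP]
    · have h2 := h 1 (by omega) h1
      rw [coeff_one_eq, coeff_pred_eq cs w h1] at h2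
      exact h2
  · intro h i hi hile
    interval_cases i
    · rw [Nat.sub_zero, coeff_zero, coeff_top]
    · rw [coeff_one_eq, coeff_pred_eq cs w hile]
      exact h

/-! ### The predecessor decomposition -/

section Decomp

variable {u v : W}

lemma adapted_words (hadd : cs.length (u * v) = cs.length u + cs.length v) :
    ∃ ωu ωv : List B, cs.IsReduced ωu ∧ cs.IsReduced ωv ∧
      cs.wordProd ωu = u ∧ cs.wordProd ωv = v ∧ cs.IsReduced (ωu ++ ωv) ∧
      cs.wordProd (ωu ++ ωv) = u * v := by
  obtain ⟨ωu, h1, h2⟩ := cs.exists_reduced_word' u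
  obtain ⟨ωv, h3, h4⟩ := cs.exists_reduced_word' v
  have h5 : cs.wordProd (ωu ++ ωv) = u * v := by rw [cs.wordProd_append, ← h2, ← h4]
  refine ⟨ωu, ωv, h1, h3, h2.symm, h4.symm, ?_, h5⟩
  show cs.length (cs.wordProd (ωu ++ ωv)) = (ωu ++ ωv).length
  rw [h5, hadd]
  have h6 : cs.length u = ωu.length := by rw [h2]; exact h1
  have h7 : cs.length v = ωv.length := by rw [h4]; exact h3
  simp [h6, h7]

theorem pred_eq_union (hmin : IsMinRep cs (supp cs u) v)
    (hadd : cs.length (u * v) = cs.length u + cs.length v) :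
    pred cs (u * v) =
      ((· * v) '' pred cs u) ∪ (((u * ·) '' pred cs v) ∩ pred cs (u * v)) := by
  obtain ⟨ωu, ωv, hured, hvred, hπu, hπv, hcred, hcprod⟩ := adapted_words cs hadd
  have hlu : cs.length u = ωu.length := by rw [← hπu]; exact hured
  have hlv : cs.length v = ωv.length := by rw [← hπv]; exact hvred
  apply Set.Subset.antisymm
  · rintro x ⟨hxle, hxlen⟩
    obtain ⟨σ, hsub, hredσ, hπσ⟩ := subword_of_le cs hxle hcred hcprod
    rcases List.sublist_append_iff.mp hsub with ⟨α, β, rfl, hα, hβ⟩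
    have hαred : cs.IsReduced α := by
      have := hredσ.take α.length
      rwa [List.take_left] at this
    have hβred : cs.IsReduced β := by
      have := hredσ.drop α.length
      rwa [List.drop_left] at this
    have hxl2 : cs.length x = α.length + β.length := by
      rw [← hπσ]
      have : cs.length (cs.wordProd (α ++ β)) = (α ++ β).length := hredσ
      simpa using this
    have htot : α.length + β.length + 1 = ωu.length + ωv.length := by
      have : cs.length (u * v) = ωu.length + ωv.length := by
        rw [hadd]; omega
      omega
    rcases Nat.lt_or_ge β.length ωv.length with hblt | hbge
    · -- α = ωu
      have hαeq : α = ωu := hα.eq_of_length (le_antisymm hα.length_le (by omega))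
      subst hαeq
      right
      refine ⟨⟨cs.wordProd β, ⟨?_, ?_⟩, ?_⟩, hxle, hxlen⟩
      · have := le_of_sublist cs hvred hβ
        rwa [hπv] at this
      · have : cs.length (cs.wordProd β) = β.length := hβred
        omega
      · rw [← hπσ, cs.wordProd_append, hπu]
    · -- β = ωv
      have hβeq : β = ωv := hβ.eq_of_length (le_antisymm hβ.length_le hbge)
      subst hβeq
      left
      refine ⟨cs.wordProd α, ⟨?_, ?_⟩, ?_⟩
      · have := le_of_sublist cs hured hα
        rwa [hπu] at this
      · have : cs.length (cs.wordProd α) = α.length := hαred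
        omega
      · rw [← hπσ, cs.wordProd_append, hπv]
  · rintro x (⟨u', ⟨hu'le, hu'len⟩, rfl⟩ | hx)
    · obtain ⟨σ', hsub', hred', hπ'⟩ := subword_of_le cs hu'le hured hπu
      have hJ : ∀ k ∈ σ', k ∈ supp cs u :=
        fun k hk => letters_mem_supp cs hured hπu (hsub'.subset hk)
      have hσ'len : σ'.length = cs.length u' := by
        have : cs.length (cs.wordProd σ') = σ'.length := hred'
        rw [hπ'] at this
        omega
      have hlen' : cs.length (u' * v) = cs.length u' + cs.length v := by
        rw [← hπ', length_wordProd_mul_of_minRep cs hmin σ' hred' hJ, hπ'] at *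
        omega
      constructor
      · have hsubc : (σ' ++ ωv).Sublist (ωu ++ ωv) := hsub'.append (List.Sublist.refl ωv)
        have hle := le_of_sublist cs hcred hsubc
        rwa [cs.wordProd_append, hπ', hπv, hcprod] at hle
      · show cs.length (u' * v) + 1 = cs.length (u * v)
        omega
    · exact hx.2

theorem pred_ncard [Finite B] (hmin : IsMinRep cs (supp cs u) v)
    (hadd : cs.length (u * v) = cs.length u + cs.length v) :
    (pred cs (u * v)).ncard =
      (pred cs u).ncard + (((u * ·) '' pred cs v) ∩ pred cs (u * v)).ncard := by
  conv_lhs => rw [pred_eq_union cs hmin hadd]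
  have hdisj : Disjoint ((· * v) '' pred cs u)
      (((u * ·) '' pred cs v) ∩ pred cs (u * v)) := by
    rw [Set.disjoint_left]
    rintro x ⟨u', ⟨hu'le, hu'len⟩, rfl⟩ ⟨⟨v'', ⟨hv''le, hv''len⟩, heq⟩, -⟩
    have hg : (u⁻¹ * u') ∈ parabolic cs (supp cs u) :=
      mul_mem (inv_mem (self_mem_parabolic_supp cs u)) (mem_parabolic_supp_of_le cs hu'le)
    have hveq : (u⁻¹ * u') * v = v'' := by
      have h7 : u * v'' = u' * v := heq
      rw [mul_assoc, ← h7]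
      group
    have := hmin _ hg
    rw [hveq] at this
    omega
  rw [Set.ncard_union_eq hdisj
    ((pred_finite cs u).image _)
    (Set.Finite.subset (pred_finite cs (u * v)) (fun _ hx => hx.2))]
  congr 1
  exact Set.ncard_image_of_injective _ (fun a b hab => mul_right_cancel hab)

theorem inter_nonempty (hadd : cs.length (u * v) = cs.length u + cs.length v)
    (hv1 : v ≠ 1) :
    (((u * ·) '' pred cs v) ∩ pred cs (u * v)).Nonempty := by
  obtain ⟨ωu, ωv, hured, hvred, hπu, hπv, hcred, hcprod⟩ := adapted_words cs hadd
  have hlu : cs.length u = ωu.length := by rw [← hπu]; exact hured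
  have hlv : cs.length v = ωv.length := by rw [← hπv]; exact hvred
  have hωv_ne : ωv ≠ [] := by
    intro h
    apply hv1
    rw [← hπv, h, cs.wordProd_nil]
  have hvpos : 1 ≤ ωv.length := List.length_pos_iff.mpr hωv_ne
  have hdrop : (ωu ++ ωv).dropLast = ωu ++ ωv.dropLast :=
    List.dropLast_append_of_ne_nil hωv_ne
  have hsubσ : (ωu ++ ωv.dropLast).Sublist (ωu ++ ωv) := by
    rw [← hdrop]
    exact List.dropLast_sublist _
  have hdredv : cs.IsReduced ωv.dropLast := by
    rw [List.dropLast_eq_take]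
    exact hvred.take _
  have hredσ : cs.IsReduced (ωu ++ ωv.dropLast) := by
    rw [← hdrop, List.dropLast_eq_take]
    exact hcred.take _
  refine ⟨cs.wordProd (ωu ++ ωv.dropLast), ⟨⟨cs.wordProd ωv.dropLast, ⟨?_, ?_⟩, ?_⟩, ?_, ?_⟩⟩
  · have := le_of_sublist cs hvred (List.dropLast_sublist ωv)
    rwa [hπv] at this
  · have h1 : cs.length (cs.wordProd ωv.dropLast) = ωv.dropLast.length := hdredv
    rw [h1, List.length_dropLast]
    omega
  · rw [cs.wordProd_append, hπu]
  · have := le_of_sublist cs hcred hsubσ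
    rwa [hcprod] at this
  · have h1 : cs.length (cs.wordProd (ωu ++ ωv.dropLast)) = (ωu ++ ωv.dropLast).length :=
      hredσ
    rw [h1]
    simp only [List.length_append, List.length_dropLast]
    omega

end Decomp

/-! ### Existence of Grassmannian-type factorizations and `#atoms ≤ #coatoms` -/

theorem exists_grassmannian_step [Finite B] :
    ∀ n : ℕ, ∀ w : W, cs.length w ≤ n → w ≠ 1 →
      ∃ u v : W, w = u * v ∧ cs.length w = cs.length u + cs.length v ∧
        IsMinRep cs (supp cs u) v ∧ v ≠ 1 ∧
        (S1 cs w).ncard = (S1 cs u).ncard + 1 := by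
  intro n
  induction n with
  | zero =>
    intro w hw hne
    exact absurd (cs.length_eq_zero_iff.mp (by omega)) hne
  | succ n ih =>
    intro w hw hne
    obtain ⟨d, hd⟩ := cs.exists_rightDescent_of_ne_one hne
    have hd' : cs.length (w * cs.simple d) < cs.length w := hd
    have hlenw' : cs.length (w * cs.simple d) + 1 = cs.length w := by
      rcases cs.length_mul_simple w d with h | h <;> omega
    set w' := w * cs.simple d with hw'def
    have hws : w = w' * cs.simple d := by
      rw [hw'def, mul_assoc, cs.simple_mul_simple_self, mul_one]
    obtain ⟨ω', hω'red, hπω'⟩ := cs.exists_reduced_word' w'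
    have hlω' : cs.length w' = ω'.length := by rw [hπω']; exact hω'red
    have hπω : cs.wordProd (ω' ++ [d]) = w := by
      rw [cs.wordProd_append, cs.wordProd_singleton, ← hπω', ← hws]
    have hωred : cs.IsReduced (ω' ++ [d]) := by
      show cs.length (cs.wordProd (ω' ++ [d])) = (ω' ++ [d]).length
      rw [hπω]
      simp only [List.length_append, List.length_singleton]
      omega
    have hw'lew : bruhatLE cs w' w := by
      have := le_of_sublist cs hωred (List.sublist_append_left ω' [d])
      rwa [hπω, ← hπω'] at this
    have hsdlew : bruhatLE cs (cs.simple d) w := by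
      have := le_of_sublist cs hωred
        (List.singleton_sublist.mpr (List.mem_append_right ω' (List.mem_singleton_self d)))
      rwa [hπω, cs.wordProd_singleton] at this
    have hS1w : ∀ x ∈ S1 cs w, x ∈ S1 cs w' ∨ x = cs.simple d := by
      rintro x ⟨hxle, hxlen⟩
      obtain ⟨σ, hsub, hredσ, hπσ⟩ := subword_of_le cs hxle hωred hπω
      have hσlen : σ.length = 1 := by
        have h1 : cs.length (cs.wordProd σ) = σ.length := hredσ
        rw [hπσ, hxlen] at h1
        omega
      obtain ⟨k, rfl⟩ := List.length_eq_one_iff.mp hσlen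
      rcases List.sublist_append_iff.mp hsub with ⟨α, β, heq, hα, hβ⟩
      rcases List.append_eq_cons_iff.mp heq.symm with ⟨rfl, rfl⟩ | ⟨αs, rfl, h2⟩
      · -- α = [], β = [k] <+ [d]
        rcases (List.sublist_singleton.mp hβ) with h | h
        · simp at h
        · right
          have : k = d := by simpa using h
          rw [← hπσ, this, cs.wordProd_singleton]
      · -- α = k :: αs
        have hαnil : αs = [] ∧ β = [] := by
          have := congrArg List.length h2
          simp at this
          constructor <;> [exact List.eq_nil_of_length_eq_zero (by omega);
            exact List.eq_nil_of_length_eq_zero (by omega)]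
        obtain ⟨rfl, rfl⟩ := hαnil
        left
        have hkmem : k ∈ ω' := by
          have : [k].Sublist ω' := by simpa using hα
          exact List.singleton_sublist.mp this
        refine ⟨?_, hxlen⟩
        rw [← hπσ, cs.wordProd_singleton, hπω']
        exact simple_le_of_mem_word cs hω'red hkmem
    by_cases hsd : bruhatLE cs (cs.simple d) w'
    · -- Case B : the support does not grow
      have hw'ne : w' ≠ 1 := by
        intro h
        rw [h] at hsd
        have := le_length_le cs hsd
        rw [cs.length_simple, cs.length_one] at this
        omega
      obtain ⟨u', v', hw'eq, hw'add, hmin', hv'ne, hS'⟩ := ih w' (by omega) hw'ne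
      have hxlen : cs.length (v' * cs.simple d) = cs.length v' + 1 := by
        rcases cs.length_mul_simple v' d with h | h
        · exact h
        · exfalso
          have hle := cs.length_mul_le u' (v' * cs.simple d)
          have hwux : w = u' * (v' * cs.simple d) := by
            rw [hws, hw'eq, mul_assoc]
          have : cs.length w ≤ cs.length u' + cs.length (v' * cs.simple d) := by
            rw [hwux]; exact hle
          omega
      have hwux : w = u' * (v' * cs.simple d) := by rw [hws, hw'eq, mul_assoc]
      -- take the minimal length element of the coset W_J * (v' * s d)
      have hne_set : {m : ℕ | ∃ g ∈ parabolic cs (supp cs u'),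
          cs.length (g * (v' * cs.simple d)) = m}.Nonempty :=
        ⟨cs.length (v' * cs.simple d), 1, one_mem _, by rw [one_mul]⟩
      obtain ⟨g₀, hg₀mem, hg₀len⟩ := Nat.sInf_mem hne_set
      have hzmin : IsMinRep cs (supp cs u') (g₀ * (v' * cs.simple d)) := by
        intro g hg
        have hmem : cs.length (g * (g₀ * (v' * cs.simple d))) ∈
            {m : ℕ | ∃ g ∈ parabolic cs (supp cs u'),
              cs.length (g * (v' * cs.simple d)) = m} :=
          ⟨g * g₀, mul_mem hg hg₀mem, by rw [mul_assoc]⟩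
        have := Nat.sInf_le hmem
        omega
      set z := g₀ * (v' * cs.simple d) with hzdef
      have hhmem : g₀⁻¹ ∈ parabolic cs (supp cs u') := inv_mem hg₀mem
      have hxhz : v' * cs.simple d = g₀⁻¹ * z := by rw [hzdef]; group
      have hhzlen : cs.length (v' * cs.simple d) = cs.length g₀⁻¹ + cs.length z := by
        rw [hxhz]
        exact length_mul_of_mem_parabolic cs hhmem hzmin
      have hwu''z : w = (u' * g₀⁻¹) * z := by rw [hwux, hxhz, mul_assoc]
      have hu''le : cs.length (u' * g₀⁻¹) ≤ cs.length u' + cs.length g₀⁻¹ :=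
        cs.length_mul_le u' g₀⁻¹
      have hwle : cs.length w ≤ cs.length (u' * g₀⁻¹) + cs.length z := by
        rw [hwu''z]; exact cs.length_mul_le _ _
      have hwlen2 : cs.length w = cs.length u' + cs.length (v' * cs.simple d) := by omega
      have hu''len : cs.length (u' * g₀⁻¹) = cs.length u' + cs.length g₀⁻¹ := by omega
      have hwaddfinal : cs.length w = cs.length (u' * g₀⁻¹) + cs.length z := by omega
      -- supp (u' * g₀⁻¹) = supp u'
      have hu''par : u' * g₀⁻¹ ∈ parabolic cs (supp cs u') :=
        mul_mem (self_mem_parabolic_supp cs u') hhmem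
      have hsupp_sub : supp cs (u' * g₀⁻¹) ⊆ supp cs u' :=
        supp_subset_supp_of_mem_parabolic cs hu''par
      have hu'le : bruhatLE cs u' (u' * g₀⁻¹) := by
        obtain ⟨σ₁, hσ1, hσ2⟩ := cs.exists_reduced_word' u'
        obtain ⟨σ₂, hσ3, hσ4⟩ := cs.exists_reduced_word' g₀⁻¹
        have hl1 : cs.length u' = σ₁.length := by rw [hσ2]; exact hσ1
        have hl2 : cs.length g₀⁻¹ = σ₂.length := by rw [hσ4]; exact hσ3
        have hπ12 : cs.wordProd (σ₁ ++ σ₂) = u' * g₀⁻¹ := by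
          rw [cs.wordProd_append, ← hσ2, ← hσ4]
        have hred12 : cs.IsReduced (σ₁ ++ σ₂) := by
          show cs.length (cs.wordProd (σ₁ ++ σ₂)) = (σ₁ ++ σ₂).length
          rw [hπ12, hu''len]
          simp only [List.length_append]
          omega
        have := le_of_sublist cs hred12 (List.sublist_append_left σ₁ σ₂)
        rwa [hπ12, ← hσ2] at this
      have hsupp_eq : supp cs (u' * g₀⁻¹) = supp cs u' :=
        Set.Subset.antisymm hsupp_sub (supp_subset_of_le cs hu'le)
      have hzmin'' : IsMinRep cs (supp cs (u' * g₀⁻¹)) z := by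
        rw [IsMinRep, hsupp_eq]
        exact hzmin
      have hzne : z ≠ 1 := by
        intro hz1
        have hxh : v' * cs.simple d = g₀⁻¹ := by rw [hxhz, hz1, mul_one]
        have hv'x : bruhatLE cs v' (v' * cs.simple d) := by
          obtain ⟨σv, hv1, hv2⟩ := cs.exists_reduced_word' v'
          have hlv' : cs.length v' = σv.length := by rw [hv2]; exact hv1
          have hπvd : cs.wordProd (σv ++ [d]) = v' * cs.simple d := by
            rw [cs.wordProd_append, cs.wordProd_singleton, ← hv2]
          have hredvd : cs.IsReduced (σv ++ [d]) := by
            show cs.length (cs.wordProd (σv ++ [d])) = (σv ++ [d]).length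
            rw [hπvd, hxlen]
            simp only [List.length_append, List.length_singleton]
            omega
          have := le_of_sublist cs hredvd (List.sublist_append_left σv [d])
          rwa [hπvd, ← hv2] at this
        have hv'par : v' ∈ parabolic cs (supp cs u') := by
          have hxmem : v' * cs.simple d ∈ parabolic cs (supp cs u') := by
            rw [hxh]; exact hhmem
          obtain ⟨σh, hh1, hh2, hh3⟩ := exists_word_of_mem_parabolic cs hxmem
          obtain ⟨σv', hs1, hs2, hs3⟩ := subword_of_le cs hv'x hh1 hh2
          rw [← hs3]
          exact wordProd_mem_parabolic cs (fun k hk => hh3 k (hs1.subset hk))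
        have := hmin' v'⁻¹ (inv_mem hv'par)
        rw [inv_mul_cancel, cs.length_one] at this
        exact hv'ne (cs.length_eq_zero_iff.mp (by omega))
      have hS1weq : S1 cs w = S1 cs w' := by
        apply Set.Subset.antisymm
        · intro x hx
          rcases hS1w x hx with h | h
          · exact h
          · rw [h]
            exact ⟨hsd, cs.length_simple d⟩
        · intro x hx
          exact ⟨bruhatLE_trans cs hx.1 hw'lew, hx.2⟩
      have hS1u : S1 cs (u' * g₀⁻¹) = S1 cs u' := by
        rw [S1_eq_image, S1_eq_image, hsupp_eq]
      exact ⟨u' * g₀⁻¹, z, hwu''z, hwaddfinal, hzmin'', hzne,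
        by rw [hS1weq, hS1u]; exact hS'⟩
    · -- Case A : the support grows
      refine ⟨w', cs.simple d, hws, ?_, ?_, ?_, ?_⟩
      · rw [cs.length_simple]; omega
      · -- IsMinRep
        intro g hg
        rw [cs.length_simple]
        by_contra hcon
        push_neg at hcon
        have hg1 : g * cs.simple d = 1 := cs.length_eq_zero_iff.mp (by omega)
        have hgsd : g = cs.simple d := by
          rw [← mul_one g, ← cs.simple_mul_simple_self d, ← mul_assoc, hg1, one_mul]
        rw [hgsd] at hg
        obtain ⟨σ, hredσ, hπσ, hJ⟩ := exists_word_of_mem_parabolic cs hg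
        have hσ1 : σ.length = 1 := by
          have h1 : cs.length (cs.wordProd σ) = σ.length := hredσ
          rw [hπσ, cs.length_simple] at h1
          omega
        obtain ⟨k, rfl⟩ := List.length_eq_one_iff.mp hσ1
        have heqk : cs.simple k = cs.simple d := by
          have := hπσ
          rwa [cs.wordProd_singleton] at this
        apply hsd
        rw [← heqk]
        exact hJ k (List.mem_singleton_self k)
      · intro h
        have := congrArg cs.length h
        rw [cs.length_simple, cs.length_one] at this
        omega
      · have hset : S1 cs w = insert (cs.simple d) (S1 cs w') := by
          apply Set.Subset.antisymm
          · intro x hx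
            rcases hS1w x hx with h | h
            · exact Set.mem_insert_of_mem _ h
            · rw [h]; exact Set.mem_insert _ _
          · rintro x hx
            rcases Set.mem_insert_iff.mp hx with rfl | hx'
            · exact ⟨hsdlew, cs.length_simple d⟩
            · exact ⟨bruhatLE_trans cs hx'.1 hw'lew, hx'.2⟩
        rw [hset, Set.ncard_insert_of_notMem (fun hc => hsd hc.1) (S1_finite cs w')]

theorem S1_ncard_le_pred_ncard [Finite B] :
    ∀ n : ℕ, ∀ w : W, cs.length w ≤ n → (S1 cs w).ncard ≤ (pred cs w).ncard := by
  intro n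
  induction n with
  | zero =>
    intro w hw
    have hS : S1 cs w = ∅ := by
      apply Set.eq_empty_iff_forall_notMem.mpr
      rintro x ⟨hle, hlen⟩
      have := le_length_le cs hle
      omega
    simp [hS]
  | succ n ih =>
    intro w hw
    by_cases hne : w = 1
    · subst hne
      have hS : S1 cs (1 : W) = ∅ := by
        apply Set.eq_empty_iff_forall_notMem.mpr
        rintro x ⟨hle, hlen⟩
        have := le_length_le cs hle
        rw [cs.length_one] at this
        omega
      simp [hS]
    · obtain ⟨u, v, hweq, hadd, hmin, hvne, hS⟩ :=
        exists_grassmannian_step cs (n + 1) w hw hne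
      subst hweq
      have hpred := pred_ncard cs hmin hadd
      have hk1 : 1 ≤ (((u * ·) '' pred cs v) ∩ pred cs (u * v)).ncard := by
        have hnem := inter_nonempty cs hadd hvne
        have hfin : (((u * ·) '' pred cs v) ∩ pred cs (u * v)).Finite :=
          Set.Finite.subset (pred_finite cs (u * v)) (fun _ hx => hx.2)
        have := (Set.ncard_pos hfin).mpr hnem
        omega
      have hvpos : 1 ≤ cs.length v := by
        by_contra hc
        push_neg at hc
        exact hvne (cs.length_eq_zero_iff.mp (by omega))
      have hu := ih u (by omega)
      omega

lemma S1_ncard_step [Finite B] {u w : W} (hle : bruhatLE cs u w)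
    (hsupp : (supp cs w).ncard = (supp cs u).ncard + 1) :
    (S1 cs w).ncard = (S1 cs u).ncard + 1 := by
  have hsub : supp cs u ⊆ supp cs w := supp_subset_of_le cs hle
  have hfinu : (supp cs u).Finite := Set.toFinite _
  have hdiff : (supp cs w \ supp cs u).ncard = 1 := by
    rw [Set.ncard_diff hsub hfinu]
    omega
  obtain ⟨i₀, hi₀⟩ := Set.ncard_eq_one.mp hdiff
  have hi₀mem : i₀ ∈ supp cs w \ supp cs u := by rw [hi₀]; exact Set.mem_singleton i₀
  have hset : S1 cs w = insert (cs.simple i₀) (S1 cs u) := by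
    apply Set.Subset.antisymm
    · rintro x ⟨hxle, hxlen⟩
      obtain ⟨i, rfl⟩ := cs.length_eq_one_iff.mp hxlen
      have hi : i ∈ supp cs w := hxle
      by_cases hiu : i ∈ supp cs u
      · exact Set.mem_insert_of_mem _ ⟨hiu, cs.length_simple i⟩
      · have : i ∈ supp cs w \ supp cs u := ⟨hi, hiu⟩
        rw [hi₀] at this
        rw [this]
        exact Set.mem_insert _ _
    · rintro x hx
      rcases Set.mem_insert_iff.mp hx with rfl | hx'
      · exact ⟨hi₀mem.1, cs.length_simple i₀⟩
      · exact ⟨bruhatLE_trans cs hx'.1 hle, hx'.2⟩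
  rw [hset, Set.ncard_insert_of_notMem (fun hc => hi₀mem.2 hc.1) (S1_finite cs u)]

end Mach

end

end TriAvoid

namespace TriAvoid

/-- **Lemma 2.8.** Suppose `w = uv` is a Grassmannian factorization. Then `w` is 2-palindromic
if and only if `u` is 2-palindromic and `|u·pred(v) ∩ pred(w)| = 1`. -/
theorem two_palindromic_iff_of_grassmannian
    {B W : Type*} [Finite B] [Group W] {M : CoxeterMatrix B} (cs : CoxeterSystem M W)
    (w u v : W) (hw : w = u * v) (hG : IsGrassmannian cs u v) :
    KPalindromic cs 2 w ↔
      KPalindromic cs 2 u ∧ (((u * ·) '' pred cs v) ∩ pred cs w).ncard = 1 := by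
  obtain ⟨⟨humem, hmin, hadd⟩, hsupp⟩ := hG
  subst hw
  have hvne : v ≠ 1 := by
    intro h
    rw [h, mul_one] at hsupp
    omega
  have hule : bruhatLE cs u (u * v) := by
    obtain ⟨ωu, ωv, hured, hvred, hπu, hπv, hcred, hcprod⟩ := Mach.adapted_words cs hadd
    have := Mach.le_of_sublist cs hcred (List.sublist_append_left ωu ωv)
    rwa [hcprod, hπu] at this
  have hS := Mach.S1_ncard_step cs hule hsupp
  have hpred := Mach.pred_ncard cs hmin hadd
  have hk1 : 1 ≤ (((u * ·) '' pred cs v) ∩ pred cs (u * v)).ncard := by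
    have hnem := Mach.inter_nonempty cs hadd hvne
    have hfin : (((u * ·) '' pred cs v) ∩ pred cs (u * v)).Finite :=
      Set.Finite.subset (Mach.pred_finite cs (u * v)) (fun _ hx => hx.2)
    have := (Set.ncard_pos hfin).mpr hnem
    omega
  have hBu := Mach.S1_ncard_le_pred_ncard cs (cs.length u) u le_rfl
  rw [Mach.kpal_two_iff, Mach.kpal_two_iff]
  omega

end TriAvoid
end
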